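/- arXiv:1410.2126 — 5 statements merged into one kernel-verified Lean document; each statement's English description precedes it below -/
import Mathlib

section
/- (Symmetry of values, main theorem.) For every fractional ideal I of O and every v ∈ ℤ^p, one has v ∈ val(I^∨) if and only if Δ(γ − v − 1, val(I)) = ∅. -/
open scoped Classical

set_option synthInstance.maxHeartbeats 1000000
set_option maxHeartbeats 1000000

noncomputable section

/-- `K`, the total ring of fractions: the product of `p` copies of the field of
formal Laurent series over `ℂ`. -/
abbrev KK (p : ℕ) : Type := Fin p → LaurentSeries ℂ

lemma algebraMap_component {p : ℕ} (c : ℂ) (i : Fin p) :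
    algebraMap ℂ (KK p) c i = HahnSeries.single (0:ℤ) c := by
  rw [Pi.algebraMap_apply, HahnSeries.algebraMap_apply', PowerSeries.algebraMap_apply,
      Algebra.algebraMap_self_apply, HahnSeries.ofPowerSeries_C, HahnSeries.C_apply]

lemma smul_eq_algebraMap_mul {p : ℕ} (c : ℂ) (x : KK p) :
    c • x = algebraMap ℂ (KK p) c * x := by
  funext i
  rw [Pi.smul_apply, Pi.mul_apply, algebraMap_component,
      HahnSeries.single_zero_mul_eq_smul]

/-- The `t`-adic order of a Laurent series, with `⊤` for the zero series. -/
def valC (g : LaurentSeries ℂ) : WithTop ℤ :=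
  if g = 0 then ⊤ else (g.order : WithTop ℤ)

/-- The value vector `val(g) = (val_1 g, …, val_p g)`. -/
def valVec {p : ℕ} (g : KK p) : Fin p → WithTop ℤ := fun i => valC (g i)

/-- The set `t^α·O~` of tuples of Laurent series whose `i`-th component has all
coefficients in degrees below `α i` equal to zero (equivalently, whose `i`-th
component has `t`-adic order at least `α i`), as a `ℂ`-submodule of `K`.
For `α = 0` this is `O~` itself. -/
def stdMod (p : ℕ) (α : Fin p → ℤ) : Submodule ℂ (KK p) where
  carrier := {g | ∀ i, ∀ j : ℤ, j < α i → (g i).coeff j = 0}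
  add_mem' := by
    intro a b ha hb i j hj
    simp [HahnSeries.coeff_add, ha i j hj, hb i j hj]
  zero_mem' := by
    intro i j hj
    simp
  smul_mem' := by
    intro c a ha i j hj
    simp [HahnSeries.coeff_smul, ha i j hj]

/-- The dual `S^∨ = {h ∈ K : h·S ⊆ O}` of a subset `S ⊆ K`, as a
`ℂ`-submodule of `K`. -/
def dualMod {p : ℕ} (O : Subalgebra ℂ (KK p)) (S : Set (KK p)) :
    Submodule ℂ (KK p) where
  carrier := {h | ∀ g ∈ S, h * g ∈ O}
  add_mem' := by
    intro a b ha hb g hg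
    simpa [add_mul] using add_mem (ha g hg) (hb g hg)
  zero_mem' := by
    intro g hg
    simpa using O.zero_mem
  smul_mem' := by
    intro c a ha g hg
    rw [smul_eq_algebraMap_mul, mul_assoc]
    exact O.mul_mem (O.algebraMap_mem c) (ha g hg)

/-- `val(S)`: values of the non-zerodivisors of `K` (elements all of whose
components are nonzero) belonging to `S`. -/
def vals {p : ℕ} (S : Set (KK p)) : Set (Fin p → ℤ) :=
  {v | ∃ g ∈ S, ∀ i, valC (g i) = (v i : WithTop ℤ)}

/-- `valbar(S)`: values of all elements of `S`. -/
def valsBar {p : ℕ} (S : Set (KK p)) : Set (Fin p → WithTop ℤ) :=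
  {v | ∃ g ∈ S, ∀ i, valC (g i) = v i}

/-- `I` is a fractional ideal of `O`: an `O`-stable `ℂ`-submodule of `K` which
is finitely generated over `O` and contains a non-zerodivisor of `K`. -/
def IsFracIdeal {p : ℕ} (O : Subalgebra ℂ (KK p)) (I : Submodule ℂ (KK p)) : Prop :=
  (∀ a ∈ O, ∀ x ∈ I, a * x ∈ I) ∧
  (∃ s : Finset (KK p), (↑s : Set (KK p)) ⊆ (I : Set (KK p)) ∧
    ∀ x ∈ I, ∃ a : KK p → KK p, (∀ g ∈ s, a g ∈ O) ∧ x = ∑ g ∈ s, a g * g) ∧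
  (∃ g ∈ I, ∀ i, g i ≠ 0)

/-- `Δ_i(v, M)`. -/
def DeltaI {p : ℕ} (i : Fin p) (v : Fin p → ℤ) (M : Set (Fin p → ℤ)) :
    Set (Fin p → ℤ) :=
  {α ∈ M | α i = v i ∧ ∀ j, j ≠ i → v j < α j}

/-- `Δ(v, M) = ⋃ i, Δ_i(v, M)`. -/
def DeltaSet {p : ℕ} (v : Fin p → ℤ) (M : Set (Fin p → ℤ)) : Set (Fin p → ℤ) :=
  ⋃ i : Fin p, DeltaI i v M

/-- `Λ_i(v, M)`. -/
def LamSet {p : ℕ} (i : Fin p) (v : Fin p → ℤ) (M : Set (Fin p → ℤ)) :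
    Set (Fin p → ℤ) :=
  {α ∈ M | α i = v i ∧ v ≤ α}

/-- `dim_ℂ (B / A)`: the dimension of the image of `B` in `K ⧸ A`
(which is canonically `B/(A ∩ B)`). -/
def qdim {p : ℕ} (A B : Submodule ℂ (KK p)) : ℕ :=
  Module.finrank ℂ ↥(B.map A.mkQ)

/-- `c_I(v) = dim_ℂ (I_v / I_{v+1})`, where `I_v = {g ∈ I : val g ≥ v}`. -/
def cI {p : ℕ} (I : Submodule ℂ (KK p)) (v : Fin p → ℤ) : ℕ :=
  qdim (I ⊓ stdMod p (v + 1)) (I ⊓ stdMod p v)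

/-- `α_I(v) = Σ_{J ⊆ {1,…,p}} (−1)^{p−|J|} c_I(v − e_J)`. -/
def alphaI {p : ℕ} (I : Submodule ℂ (KK p)) (v : Fin p → ℤ) : ℤ :=
  ∑ J : Finset (Fin p),
    (-1 : ℤ) ^ (p - J.card) * cI I (fun j => v j - if j ∈ J then 1 else 0)

/-- `O` itself, as a `ℂ`-submodule of `K`. -/
def algSubmodule {p : ℕ} (O : Subalgebra ℂ (KK p)) : Submodule ℂ (KK p) where
  carrier := O
  add_mem' := fun ha hb => O.add_mem ha hb
  zero_mem' := O.zero_mem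
  smul_mem' := fun c x hx => by
    rw [smul_eq_algebraMap_mul]
    exact O.mul_mem (O.algebraMap_mem c) hx

-- ===== auxiliary material =====

/-- `g` has all coefficients in degrees `< a` equal to zero. -/
def memStd (g : LaurentSeries ℂ) (a : ℤ) : Prop := ∀ j : ℤ, j < a → g.coeff j = 0

lemma mem_stdMod_iff {p : ℕ} {α : Fin p → ℤ} {g : KK p} :
    g ∈ stdMod p α ↔ ∀ i, memStd (g i) (α i) := Iff.rfl

lemma memStd_mono {g : LaurentSeries ℂ} {a b : ℤ} (h : memStd g a) (hba : b ≤ a) : memStd g b :=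
  fun j hj => h j (lt_of_lt_of_le hj hba)

lemma memStd_single {c : ℤ} (r : ℂ) {a : ℤ} (hac : a ≤ c) :
    memStd (HahnSeries.single c r) a := by
  intro j hj
  rw [HahnSeries.coeff_single, if_neg (by omega : ¬ j = c)]

lemma memStd_add {f g : LaurentSeries ℂ} {a : ℤ} (hf : memStd f a) (hg : memStd g a) :
    memStd (f + g) a := by
  intro j hj
  rw [HahnSeries.coeff_add, hf j hj, hg j hj, add_zero]

lemma memStd_mul {f g : LaurentSeries ℂ} {a b : ℤ} (hf : memStd f a) (hg : memStd g b) :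
    memStd (f * g) (a + b) := by
  intro j hj
  rw [HahnSeries.coeff_mul]
  refine Finset.sum_eq_zero ?_
  rintro ⟨x, y⟩ hxy
  have hsum : x + y = j := (Finset.mem_addAntidiagonal.mp hxy).2.2
  rcases lt_or_ge x a with h | h
  · rw [hf x h, zero_mul]
  · rw [hg y (by omega), mul_zero]

/-- `g` is nonzero with order exactly `c`. -/
def hasVal (g : LaurentSeries ℂ) (c : ℤ) : Prop := g.coeff c ≠ 0 ∧ memStd g c

lemma hasVal.ne_zero {g : LaurentSeries ℂ} {c : ℤ} (h : hasVal g c) : g ≠ 0 := by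
  intro h0
  exact h.1 (by rw [h0]; exact HahnSeries.coeff_zero)

lemma hasVal.order_eq {g : LaurentSeries ℂ} {c : ℤ} (h : hasVal g c) : g.order = c :=
  le_antisymm (HahnSeries.order_le_of_coeff_ne_zero h.1)
    (le_of_not_gt fun hlt => (fun hx => mt HahnSeries.coeff_order_eq_zero.mp hx) h.ne_zero (h.2 _ hlt))

lemma hasVal_order {g : LaurentSeries ℂ} (h : g ≠ 0) : hasVal g g.order :=
  ⟨(fun hx => mt HahnSeries.coeff_order_eq_zero.mp hx) h, fun _ hj => HahnSeries.coeff_eq_zero_of_lt_order hj⟩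

lemma memStd_le_order {g : LaurentSeries ℂ} {b : ℤ} (h : memStd g b) (hg : g ≠ 0) :
    b ≤ g.order :=
  le_of_not_gt fun hlt => (fun hx => mt HahnSeries.coeff_order_eq_zero.mp hx) hg (h _ hlt)

lemma valC_eq_iff {g : LaurentSeries ℂ} {c : ℤ} :
    valC g = (c : WithTop ℤ) ↔ hasVal g c := by
  constructor
  · intro h
    rcases eq_or_ne g 0 with h0 | h0
    · rw [valC, if_pos h0] at h
      exact absurd h.symm (WithTop.coe_ne_top)
    · rw [valC, if_neg h0] at h
      have : g.order = c := by exact_mod_cast h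
      rw [← this]
      exact hasVal_order h0
  · intro h
    rw [valC, if_neg h.ne_zero, h.order_eq]

lemma mem_vals {p : ℕ} {S : Set (KK p)} {v : Fin p → ℤ} :
    v ∈ vals S ↔ ∃ g ∈ S, ∀ i, hasVal (g i) (v i) := by
  unfold vals
  simp only [Set.mem_setOf_eq, valC_eq_iff]

/-- `t^α` as an element of `K`. -/
def tpow {p : ℕ} (α : Fin p → ℤ) : KK p := fun i => HahnSeries.single (α i) 1

lemma tpow_mul_tpow {p : ℕ} (α β : Fin p → ℤ) : tpow α * tpow β = tpow (α + β) := by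
  funext i
  simp only [Pi.mul_apply, tpow, HahnSeries.single_mul_single, one_mul, Pi.add_apply]

lemma tpow_zero {p : ℕ} : tpow (0 : Fin p → ℤ) = 1 := by
  funext i
  simp only [tpow, Pi.zero_apply, HahnSeries.single_zero_one, Pi.one_apply]

lemma tpow_neg_mul {p : ℕ} (α : Fin p → ℤ) : tpow (-α) * tpow α = 1 := by
  rw [tpow_mul_tpow, neg_add_cancel, tpow_zero]

lemma tpow_mem_stdMod {p : ℕ} {α β : Fin p → ℤ} (h : ∀ i, β i ≤ α i) :
    tpow α ∈ stdMod p β :=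
  mem_stdMod_iff.mpr fun i => memStd_single 1 (h i)

lemma stdMod_le_stdMod {p : ℕ} {α β : Fin p → ℤ} (h : ∀ i, β i ≤ α i) :
    stdMod p α ≤ stdMod p β :=
  fun _ hg => mem_stdMod_iff.mpr fun i => memStd_mono (mem_stdMod_iff.mp hg i) (h i)

lemma mem_dualMod {p : ℕ} {O : Subalgebra ℂ (KK p)} {S : Set (KK p)} {h : KK p} :
    h ∈ dualMod O S ↔ ∀ g ∈ S, h * g ∈ O := Iff.rfl

lemma one_mem_stdMod_zero {p : ℕ} : (1 : KK p) ∈ stdMod p (0 : Fin p → ℤ) := by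
  refine mem_stdMod_iff.mpr fun i j hj => ?_
  have hj' : j < 0 := by simpa using hj
  rw [Pi.one_apply, HahnSeries.coeff_one, if_neg (by omega : ¬ j = 0)]

lemma stdMod_gamma_subset {p : ℕ} {O : Subalgebra ℂ (KK p)} {γz : Fin p → ℤ}
    (hγ : dualMod O (stdMod p 0 : Set (KK p)) = stdMod p γz) :
    ∀ h ∈ stdMod p γz, h ∈ O := by
  intro h hh
  rw [← hγ] at hh
  simpa using hh 1 one_mem_stdMod_zero

lemma dualMod_stdMod {p : ℕ} {O : Subalgebra ℂ (KK p)} {γz : Fin p → ℤ}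
    (hγ : dualMod O (stdMod p 0 : Set (KK p)) = stdMod p γz) (a : Fin p → ℤ) :
    dualMod O (stdMod p a : Set (KK p)) = stdMod p (fun i => γz i - a i) := by
  ext h
  constructor
  · intro hh
    have h1 : h * tpow a ∈ dualMod O (stdMod p 0 : Set (KK p)) := by
      intro g hg
      have hga : tpow a * g ∈ stdMod p a := by
        refine mem_stdMod_iff.mpr fun i => ?_
        have := memStd_mul (memStd_single (c := a i) 1 le_rfl) (mem_stdMod_iff.mp hg i)
        have h2 : (tpow a * g) i = HahnSeries.single (a i) 1 * g i := rfl
        rw [h2]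
        simpa using this
      rw [mul_assoc]
      exact hh _ hga
    rw [hγ] at h1
    refine mem_stdMod_iff.mpr fun i => ?_
    have heq : h = (h * tpow a) * tpow (-a) := by
      rw [mul_assoc, tpow_mul_tpow, add_neg_cancel, tpow_zero, mul_one]
    have hm : memStd ((h * tpow a) i * HahnSeries.single (-(a i)) 1) (γz i + -(a i)) :=
      memStd_mul (mem_stdMod_iff.mp h1 i) (memStd_single 1 le_rfl)
    have hcomp : h i = (h * tpow a) i * HahnSeries.single (-(a i)) 1 := by
      conv_lhs => rw [heq]
      rfl
    rw [hcomp]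
    exact memStd_mono hm (by omega)
  · intro hh g hg
    apply stdMod_gamma_subset hγ
    refine mem_stdMod_iff.mpr fun i => ?_
    have := memStd_mul (mem_stdMod_iff.mp hh i) (mem_stdMod_iff.mp hg i)
    rw [sub_add_cancel] at this
    exact this

lemma dualMod_sup {p : ℕ} (O : Subalgebra ℂ (KK p)) (A B : Submodule ℂ (KK p)) :
    dualMod O ((A ⊔ B : Submodule ℂ (KK p)) : Set (KK p)) = dualMod O A ⊓ dualMod O B := by
  ext h
  simp only [Submodule.mem_inf]
  constructor
  · intro hh
    exact ⟨fun g hg => hh g (Submodule.mem_sup_left hg),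
           fun g hg => hh g (Submodule.mem_sup_right hg)⟩
  · rintro ⟨h1, h2⟩ g hg
    obtain ⟨x, hx, y, hy, rfl⟩ := Submodule.mem_sup.mp hg
    rw [mul_add]
    exact O.add_mem (h1 x hx) (h2 y hy)

/-- A submodule over `ℂ` is not covered by finitely many "relatively proper" submodules. -/
lemma exists_notin {p : ℕ} {W : Submodule ℂ (KK p)} {n : ℕ} {f : Fin n → Submodule ℂ (KK p)}
    (h : ∀ i, ∃ x ∈ W, x ∉ f i) : ∃ x ∈ W, ∀ i, x ∉ f i := by
  by_contra hc
  push_neg at hc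
  have hcov : ⋃ i, (((f i).comap W.subtype : Submodule ℂ ↥W) : Set ↥W) = Set.univ := by
    ext x
    refine ⟨fun _ => trivial, fun _ => ?_⟩
    obtain ⟨i, hi⟩ := hc x x.2
    refine Set.mem_iUnion.mpr ⟨i, ?_⟩
    exact hi
  obtain ⟨i, hi⟩ :=
    Subspace.exists_eq_top_of_iUnion_eq_univ (k := ℂ) (E := ↥W) (p := fun i => ((f i).comap W.subtype : Submodule ℂ ↥W)) hcov
  obtain ⟨x, hxW, hxf⟩ := h i
  have : (⟨x, hxW⟩ : ↥W) ∈ (f i).comap W.subtype := by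
    rw [hi]; trivial
  exact hxf this

lemma mem_vals_iff_submodule {p : ℕ} (M : Submodule ℂ (KK p)) (v : Fin p → ℤ) :
    v ∈ vals (M : Set (KK p)) ↔
      ∀ i, ∃ g ∈ M ⊓ stdMod p v,
        g ∉ M ⊓ stdMod p (fun j => if j = i then v j + 1 else v j) := by
  rw [mem_vals]
  constructor
  · rintro ⟨g, hgM, hg⟩ i
    refine ⟨g, Submodule.mem_inf.mpr ⟨hgM, mem_stdMod_iff.mpr fun i' => (hg i').2⟩, ?_⟩
    intro hmem
    have := mem_stdMod_iff.mp (Submodule.mem_inf.mp hmem).2 i (v i) (by simp)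
    exact (hg i).1 this
  · intro h
    obtain ⟨g, hgW, hgf⟩ := exists_notin h
    rw [Submodule.mem_inf] at hgW
    refine ⟨g, hgW.1, fun i => ?_⟩
    refine ⟨?_, mem_stdMod_iff.mp hgW.2 i⟩
    intro h0
    apply hgf i
    rw [Submodule.mem_inf]
    refine ⟨hgW.1, mem_stdMod_iff.mpr fun i' j hj => ?_⟩
    by_cases hii : i' = i
    · subst hii
      rw [if_pos rfl] at hj
      rcases eq_or_lt_of_le (show j ≤ v i' by omega) with he | hl
      · rw [he]; exact h0
      · exact mem_stdMod_iff.mp hgW.2 i' j hl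
    · rw [if_neg hii] at hj
      exact mem_stdMod_iff.mp hgW.2 i' j hj

/-- The element of `K` with `t^c` in slot `i` and `0` elsewhere. -/
def usingle {p : ℕ} (i : Fin p) (c : ℤ) : KK p :=
  fun j => if j = i then HahnSeries.single c 1 else 0

lemma usingle_same {p : ℕ} (i : Fin p) (c : ℤ) : usingle i c i = HahnSeries.single c 1 :=
  if_pos rfl

lemma usingle_ne {p : ℕ} {i j : Fin p} (h : j ≠ i) (c : ℤ) : usingle i c j = 0 := if_neg h

lemma usingle_mem_stdMod {p : ℕ} {i : Fin p} {c : ℤ} {α : Fin p → ℤ} (h : α i ≤ c) :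
    usingle i c ∈ stdMod p α := by
  refine mem_stdMod_iff.mpr fun j => ?_
  by_cases hji : j = i
  · subst hji
    rw [usingle_same]
    exact memStd_single 1 h
  · rw [usingle_ne hji]
    intro k hk
    exact HahnSeries.coeff_zero

lemma sup_eq_sup_iff {p : ℕ} (I : Submodule ℂ (KK p)) (c : Fin p → ℤ) (i : Fin p) :
    I ⊔ stdMod p (fun j => if j = i then c j - 1 else c j) = I ⊔ stdMod p c ↔
      usingle i (c i - 1) ∈ I ⊔ stdMod p c := by
  constructor
  · intro h
    rw [← h]
    refine Submodule.mem_sup_right (usingle_mem_stdMod ?_)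
    rw [if_pos rfl]
  · intro hu
    refine le_antisymm ?_
      (sup_le_sup_left (stdMod_le_stdMod fun j => by by_cases hji : j = i <;> simp [hji]) _)
    refine sup_le le_sup_left ?_
    intro y hy
    set cc : ℂ := (y i).coeff (c i - 1) with hcc
    have h2 : y - cc • usingle i (c i - 1) ∈ stdMod p c := by
      refine mem_stdMod_iff.mpr fun j k hk => ?_
      rw [Pi.sub_apply, Pi.smul_apply, HahnSeries.coeff_sub, HahnSeries.coeff_smul]
      by_cases hji : j = i
      · subst hji
        rw [usingle_same, HahnSeries.coeff_single]
        rcases eq_or_ne k (c j - 1) with he | hne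
        · rw [if_pos he, he, smul_eq_mul, mul_one, ← hcc, sub_self]
        · rw [if_neg hne, smul_zero, sub_zero]
          have := mem_stdMod_iff.mp hy j
          rw [if_pos rfl] at this
          exact this k (by omega)
      · rw [usingle_ne hji, HahnSeries.coeff_zero, smul_zero, sub_zero]
        have := mem_stdMod_iff.mp hy j
        rw [if_neg hji] at this
        exact this k hk
    have hdecomp : y = cc • usingle i (c i - 1) + (y - cc • usingle i (c i - 1)) := by
      rw [add_sub_cancel]
    rw [hdecomp]
    exact Submodule.add_mem _ (Submodule.smul_mem _ _ hu) (Submodule.mem_sup_right h2)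

lemma usingle_mem_sup_iff {p : ℕ} {O : Subalgebra ℂ (KK p)} {I : Submodule ℂ (KK p)}
    {γz : Fin p → ℤ} (hγsub : ∀ h ∈ stdMod p γz, h ∈ O)
    (hstab : ∀ a ∈ O, ∀ x ∈ I, a * x ∈ I)
    (hfex : ∃ f ∈ I, ∀ i, f i ≠ 0)
    (c : Fin p → ℤ) (i : Fin p) :
    usingle i (c i - 1) ∈ I ⊔ stdMod p c ↔
      ∃ α ∈ vals (I : Set (KK p)), α i = c i - 1 ∧ ∀ j, j ≠ i → c j - 1 < α j := by
  constructor
  · intro hu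
    obtain ⟨x, hxI, ss, hss, hsum⟩ := Submodule.mem_sup.mp hu
    have hxe : ∀ j, x j = usingle i (c i - 1) j - ss j := by
      intro j
      have : x = usingle i (c i - 1) - ss := eq_sub_of_add_eq hsum
      rw [this, Pi.sub_apply]
    have hvi : hasVal (x i) (c i - 1) := by
      constructor
      · rw [hxe i, HahnSeries.coeff_sub, usingle_same, HahnSeries.coeff_single, if_pos rfl,
          mem_stdMod_iff.mp hss i _ (by omega)]
        simp
      · intro k hk
        rw [hxe i, HahnSeries.coeff_sub, usingle_same, HahnSeries.coeff_single,
          if_neg (by omega : ¬ k = c i - 1), mem_stdMod_iff.mp hss i _ (by omega), sub_zero]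
    have hvj : ∀ j, j ≠ i → memStd (x j) (c j) := by
      intro j hji k hk
      rw [hxe j, HahnSeries.coeff_sub, usingle_ne hji, HahnSeries.coeff_zero,
        mem_stdMod_iff.mp hss j _ hk, sub_zero]
    obtain ⟨f, hfI, hfne⟩ := hfex
    set o : Fin p → ℤ := fun j => (f j).order with ho
    set m : Fin p → ℤ := fun j =>
      max (γz j) (max (c j - o j) (if x j = 0 then c j - o j else (x j).order + 1 - o j)) with hm
    have hm1 : ∀ j, γz j ≤ m j := fun j => le_max_left _ _
    have hm2 : ∀ j, c j - o j ≤ m j := fun j => le_trans (le_max_left _ _) (le_max_right _ _)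
    set f' : KK p := tpow m * f with hf'
    have hf'I : f' ∈ I := hstab _ (hγsub _ (tpow_mem_stdMod hm1)) f hfI
    have hf'std : ∀ j, memStd (f' j) (m j + o j) := by
      intro j
      have : f' j = HahnSeries.single (m j) 1 * f j := rfl
      rw [this]
      exact memStd_mul (memStd_single 1 le_rfl)
        (fun k hk => HahnSeries.coeff_eq_zero_of_lt_order hk)
    have hf'c : ∀ j, memStd (f' j) (c j) := fun j =>
      memStd_mono (hf'std j) (by have := hm2 j; omega)
    set g : KK p := x + f' with hg
    have hgI : g ∈ I := I.add_mem hxI hf'I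
    have hgi : hasVal (g i) (c i - 1) := by
      constructor
      · have : (g i).coeff (c i - 1) = (x i).coeff (c i - 1) + (f' i).coeff (c i - 1) := by
          rw [hg, Pi.add_apply, HahnSeries.coeff_add]
        rw [this, hf'c i _ (by omega), add_zero]
        exact hvi.1
      · have : g i = x i + f' i := rfl
        rw [this]
        exact memStd_add hvi.2 (memStd_mono (hf'c i) (by omega))
    have hgj : ∀ j, j ≠ i → g j ≠ 0 ∧ c j ≤ (g j).order := by
      intro j hji
      have hgjc : memStd (g j) (c j) := by
        have : g j = x j + f' j := rfl
        rw [this]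
        exact memStd_add (hvj j hji) (hf'c j)
      by_cases h0 : x j = 0
      · have hgf : g j = f' j := by
          have : g j = x j + f' j := rfl
          rw [this, h0, zero_add]
        have hne : g j ≠ 0 := by
          rw [hgf, hf']
          have : (tpow m * f) j = HahnSeries.single (m j) 1 * f j := rfl
          rw [this]
          exact mul_ne_zero (HahnSeries.single_ne_zero one_ne_zero) (hfne j)
        exact ⟨hne, memStd_le_order hgjc hne⟩
      · have hmj : (x j).order + 1 - o j ≤ m j := by
          have h1 : (x j).order + 1 - o j ≤
              ((c j - o j) ⊔ if x j = 0 then c j - o j else (x j).order + 1 - o j) := by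
            rw [if_neg h0]
            exact le_max_right _ _
          exact le_trans h1 (le_max_right _ _)
        have hf'hi : memStd (f' j) ((x j).order + 1) :=
          memStd_mono (hf'std j) (by omega)
        have hco : (g j).coeff ((x j).order) ≠ 0 := by
          have : (g j).coeff ((x j).order) = (x j).coeff ((x j).order) + (f' j).coeff ((x j).order) := by
            rw [hg, Pi.add_apply, HahnSeries.coeff_add]
          rw [this, hf'hi _ (by omega), add_zero]
          exact (fun hx => mt HahnSeries.coeff_order_eq_zero.mp hx) h0
        have hne : g j ≠ 0 := by
          intro hz
          rw [hz] at hco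
          exact hco HahnSeries.coeff_zero
        exact ⟨hne, memStd_le_order hgjc hne⟩
    refine ⟨fun j => if j = i then c i - 1 else (g j).order, ?_,
      by show (if i = i then c i - 1 else (g i).order) = c i - 1; rw [if_pos rfl], ?_⟩
    · refine mem_vals.mpr ⟨g, hgI, fun j => ?_⟩
      show hasVal (g j) (if j = i then c i - 1 else (g j).order)
      by_cases hji : j = i
      · subst hji
        rw [if_pos rfl]
        exact hgi
      · rw [if_neg hji]
        exact hasVal_order (hgj j hji).1
    · intro j hji
      show c j - 1 < if j = i then c i - 1 else (g j).order
      rw [if_neg hji]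
      have := (hgj j hji).2
      omega
  · rintro ⟨α, hαv, hαi, hαj⟩
    obtain ⟨g, hgI, hgv⟩ := mem_vals.mp hαv
    have hcc : (g i).coeff (c i - 1) ≠ 0 := by
      have := (hgv i).1
      rw [hαi] at this
      exact this
    set cc : ℂ := (g i).coeff (c i - 1) with hccdef
    have hrest : usingle i (c i - 1) - cc⁻¹ • g ∈ stdMod p c := by
      refine mem_stdMod_iff.mpr fun j k hk => ?_
      rw [Pi.sub_apply, Pi.smul_apply, HahnSeries.coeff_sub, HahnSeries.coeff_smul, smul_eq_mul]
      by_cases hji : j = i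
      · subst hji
        rw [usingle_same, HahnSeries.coeff_single]
        rcases eq_or_ne k (c j - 1) with he | hne
        · rw [if_pos he, he, ← hccdef, inv_mul_cancel₀ hcc, sub_self]
        · rw [if_neg hne]
          have hmem : memStd (g j) (c j - 1) := by
            have := (hgv j).2
            rw [hαi] at this
            exact this
          rw [hmem k (by omega), mul_zero, sub_zero]
      · rw [usingle_ne hji, HahnSeries.coeff_zero]
        have hmem : memStd (g j) (c j) :=
          memStd_mono (hgv j).2 (by have := hαj j hji; omega)
        rw [hmem k hk, mul_zero, sub_zero]
    have : usingle i (c i - 1) = cc⁻¹ • g + (usingle i (c i - 1) - cc⁻¹ • g) := by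
      rw [add_sub_cancel]
    rw [this]
    exact Submodule.add_mem _ (Submodule.mem_sup_left (I.smul_mem _ hgI))
      (Submodule.mem_sup_right hrest)

lemma coeff_sum {ι : Type*} (u : Finset ι) (F : ι → LaurentSeries ℂ) (k : ℤ) :
    (∑ i ∈ u, F i).coeff k = ∑ i ∈ u, (F i).coeff k :=
  map_sum (HahnSeries.coeff.addMonoidHom k) F u

/-- `x` is representable as an `O`-combination of the elements of `s`. -/
def ORep {p : ℕ} (O : Subalgebra ℂ (KK p)) (s : Finset (KK p)) (x : KK p) : Prop :=
  ∃ a : KK p → KK p, (∀ g ∈ s, a g ∈ O) ∧ x = ∑ g ∈ s, a g * g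

lemma ORep.zero {p : ℕ} {O : Subalgebra ℂ (KK p)} {s : Finset (KK p)} : ORep O s 0 :=
  ⟨0, fun _ _ => O.zero_mem, by simp⟩

lemma ORep.add {p : ℕ} {O : Subalgebra ℂ (KK p)} {s : Finset (KK p)} {x y : KK p}
    (hx : ORep O s x) (hy : ORep O s y) : ORep O s (x + y) := by
  obtain ⟨a, ha, hxe⟩ := hx
  obtain ⟨b, hb, hye⟩ := hy
  refine ⟨a + b, fun g hg => O.add_mem (ha g hg) (hb g hg), ?_⟩
  rw [hxe, hye, ← Finset.sum_add_distrib]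
  exact Finset.sum_congr rfl fun g _ => by rw [Pi.add_apply, add_mul]

lemma ORep.mono {p : ℕ} {O : Subalgebra ℂ (KK p)} {s t : Finset (KK p)} {x : KK p}
    (hst : s ⊆ t) (hx : ORep O s x) : ORep O t x := by
  obtain ⟨a, ha, hxe⟩ := hx
  refine ⟨fun g => if g ∈ s then a g else 0, fun g _ => ?_, ?_⟩
  · dsimp only
    split
    · exact ha _ ‹_›
    · exact O.zero_mem
  · rw [hxe, Finset.sum_congr rfl (fun g hg => by rw [if_pos hg] :
      ∀ g ∈ s, a g * g = (if g ∈ s then a g else 0) * g)]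
    exact Finset.sum_subset hst fun g _ hgs => by rw [if_neg hgs, zero_mul]

lemma ORep.base {p : ℕ} {O : Subalgebra ℂ (KK p)} {s : Finset (KK p)} {g a : KK p}
    (hg : g ∈ s) (ha : a ∈ O) : ORep O s (a * g) := by
  refine ⟨fun h => if h = g then a else 0, fun h _ => ?_, ?_⟩
  · dsimp only
    split
    · exact ha
    · exact O.zero_mem
  · have h1 : ∀ h ∈ s, (if h = g then a else 0) * h = if h = g then a * h else 0 := by
      intro h _
      split <;> simp
    rw [Finset.sum_congr rfl h1, Finset.sum_ite_eq' s g (fun h => a * h), if_pos hg]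

lemma ORep.sum {p : ℕ} {O : Subalgebra ℂ (KK p)} {s : Finset (KK p)} {ι : Type*}
    (u : Finset ι) (f : ι → KK p) (h : ∀ i ∈ u, ORep O s (f i)) :
    ORep O s (∑ i ∈ u, f i) :=
  Finset.sum_induction f (ORep O s) (fun _ _ => ORep.add) ORep.zero h

lemma isFracIdeal_sup {p : ℕ} {O : Subalgebra ℂ (KK p)} {I : Submodule ℂ (KK p)}
    {γz : Fin p → ℤ}
    (hO : (O : Set (KK p)) ⊆ (stdMod p 0 : Set (KK p)))
    (hγsub : ∀ h ∈ stdMod p γz, h ∈ O)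
    (hI : IsFracIdeal O I) (c : Fin p → ℤ) :
    IsFracIdeal O (I ⊔ stdMod p c) := by
  obtain ⟨hstab, ⟨sI, hsIsub, hsIgen⟩, f, hfI, hfne⟩ := hI
  refine ⟨?_, ?_, f, Submodule.mem_sup_left hfI, hfne⟩
  · -- stability
    intro a ha x hx
    obtain ⟨xI, hxI, y, hy, rfl⟩ := Submodule.mem_sup.mp hx
    rw [mul_add]
    refine Submodule.add_mem _ (Submodule.mem_sup_left (hstab a ha xI hxI))
      (Submodule.mem_sup_right ?_)
    refine mem_stdMod_iff.mpr fun i => ?_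
    have h1 : memStd (a i) 0 := by
      have := hO ha
      intro k hk
      exact this i k (by simpa using hk)
    have := memStd_mul h1 (mem_stdMod_iff.mp hy i)
    rw [zero_add] at this
    exact this
  · -- finite generation
    set cpos : Fin p → ℤ := fun j => max (c j) 0 with hcpos
    set d : Fin p → ℤ := fun j => γz j + cpos j with hd
    set s2 : Finset (KK p) :=
      Finset.univ.biUnion fun i : Fin p =>
        (Finset.Ico (c i) (d i)).image fun j => usingle i j with hs2
    refine ⟨(sI ∪ s2) ∪ {tpow cpos}, ?_, ?_⟩
    · -- the generators lie in the module
      intro g hg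
      rcases Finset.mem_union.mp hg with hg | hg
      · rcases Finset.mem_union.mp hg with hg | hg
        · exact Submodule.mem_sup_left (hsIsub hg)
        · obtain ⟨i, -, hgi⟩ := Finset.mem_biUnion.mp hg
          obtain ⟨j, hj, rfl⟩ := Finset.mem_image.mp hgi
          exact Submodule.mem_sup_right (usingle_mem_stdMod (Finset.mem_Ico.mp hj).1)
      · rw [Finset.mem_singleton.mp hg]
        exact Submodule.mem_sup_right (tpow_mem_stdMod fun i => le_max_left _ _)
    · -- every element is an `O`-combination
      intro x hx
      obtain ⟨xI, hxI, y, hy, rfl⟩ := Submodule.mem_sup.mp hx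
      set y2 : KK p := ∑ i : Fin p, ∑ j ∈ Finset.Ico (c i) (d i),
        ((y i).coeff j) • usingle i j with hy2
      have hy2coeff : ∀ i' : Fin p, ∀ k : ℤ,
          (y2 i').coeff k = if k ∈ Finset.Ico (c i') (d i') then (y i').coeff k else 0 := by
        intro i' k
        have happ : y2 i' = ∑ i : Fin p, ∑ j ∈ Finset.Ico (c i) (d i),
            ((y i).coeff j) • usingle i j i' := by
          rw [hy2, Finset.sum_apply]
          exact Finset.sum_congr rfl fun i _ => Finset.sum_apply _ _ _
        rw [happ, coeff_sum]
        rw [Finset.sum_eq_single i' ?h1 ?h2]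
        · rw [coeff_sum]
          have hterm : ∀ j ∈ Finset.Ico (c i') (d i'),
              (((y i').coeff j) • usingle i' j i').coeff k =
                if k = j then (y i').coeff j else 0 := by
            intro j _
            rw [usingle_same i' j, HahnSeries.coeff_smul, HahnSeries.coeff_single]
            split
            · rw [smul_eq_mul, mul_one]
            · rw [smul_zero]
          rw [Finset.sum_congr rfl hterm]
          have := Finset.sum_ite_eq (Finset.Ico (c i') (d i')) k (fun j => (y i').coeff j)
          simpa using this
        · intro i _ hii
          rw [coeff_sum]
          refine Finset.sum_eq_zero fun j _ => ?_
          rw [usingle_ne (Ne.symm hii), smul_zero, HahnSeries.coeff_zero]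
        · intro hni
          exact absurd (Finset.mem_univ i') hni
      set r : KK p := y - y2 with hr
      have hrstd : r ∈ stdMod p d := by
        refine mem_stdMod_iff.mpr fun i' k hk => ?_
        rw [hr, Pi.sub_apply, HahnSeries.coeff_sub, hy2coeff i' k]
        by_cases hck : c i' ≤ k
        · rw [if_pos (Finset.mem_Ico.mpr ⟨hck, hk⟩), sub_self]
        · rw [if_neg (fun hmem => hck (Finset.mem_Ico.mp hmem).1), sub_zero]
          exact mem_stdMod_iff.mp hy i' k (by omega)
      have hrO : r * tpow (-cpos) ∈ O := by
        apply hγsub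
        refine mem_stdMod_iff.mpr fun i => ?_
        have : (r * tpow (-cpos)) i = r i * HahnSeries.single (-(cpos i)) 1 := rfl
        rw [this]
        have := memStd_mul (mem_stdMod_iff.mp hrstd i) (memStd_single (c := -(cpos i)) 1 le_rfl)
        refine memStd_mono this ?_
        have hdi : d i = γz i + cpos i := rfl
        omega
      have hrrep : ORep O ((sI ∪ s2) ∪ {tpow cpos}) r := by
        have hre : r = (r * tpow (-cpos)) * tpow cpos := by
          rw [mul_assoc, tpow_neg_mul, mul_one]
        rw [hre]
        exact ORep.base (Finset.mem_union_right _ (Finset.mem_singleton_self _)) hrO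
      have hy2rep : ORep O ((sI ∪ s2) ∪ {tpow cpos}) y2 := by
        rw [hy2]
        refine ORep.sum _ _ fun i _ => ?_
        refine ORep.sum _ _ fun j hj => ?_
        rw [smul_eq_algebraMap_mul]
        refine ORep.base ?_ (O.algebraMap_mem _)
        refine Finset.mem_union_left _ (Finset.mem_union_right _ ?_)
        exact Finset.mem_biUnion.mpr ⟨i, Finset.mem_univ i,
          Finset.mem_image.mpr ⟨j, hj, rfl⟩⟩
      have hxIrep : ORep O ((sI ∪ s2) ∪ {tpow cpos}) xI := by
        obtain ⟨a, ha, hae⟩ := hsIgen xI hxI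
        refine ORep.mono ?_ ⟨a, ha, hae⟩
        exact Finset.Subset.trans Finset.subset_union_left Finset.subset_union_left
      have hfinal : ORep O ((sI ∪ s2) ∪ {tpow cpos}) (xI + y) := by
        have hyy : y = y2 + r := by rw [hr, add_sub_cancel]
        rw [hyy, ← add_assoc]
        exact ORep.add (ORep.add hxIrep hy2rep) hrrep
      exact hfinal
/-- **Symmetry of values** (main theorem).  For every fractional ideal `I` of `O`
and every `v ∈ ℤ^p`: `v ∈ val(I^∨)` iff `Δ(γ − v − 1, val I) = ∅`. -/
theorem symmetry_of_values {p : ℕ} (hp : 1 ≤ p) (O : Subalgebra ℂ (KK p))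
    (hO : (O : Set (KK p)) ⊆ (stdMod p 0 : Set (KK p)))
    (γ : Fin p → ℕ)
    (hγ : dualMod O (stdMod p 0 : Set (KK p)) = stdMod p (fun i => (γ i : ℤ)))
    (hG1 : ∀ I : Submodule ℂ (KK p), IsFracIdeal O I →
      dualMod O ((dualMod O (I : Set (KK p)) : Submodule ℂ (KK p)) : Set (KK p)) = I)
    (hG2 : ∀ I J : Submodule ℂ (KK p), IsFracIdeal O I → IsFracIdeal O J → I ≤ J →
      qdim I J = qdim (dualMod O (J : Set (KK p))) (dualMod O (I : Set (KK p))))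
    (hG3 : DeltaSet (fun i => (γ i : ℤ) - 1) (vals (O : Set (KK p))) = ∅)
    (I : Submodule ℂ (KK p)) (hI : IsFracIdeal O I) (v : Fin p → ℤ) :
    v ∈ vals ((dualMod O (I : Set (KK p)) : Submodule ℂ (KK p)) : Set (KK p)) ↔
      DeltaSet (fun i => (γ i : ℤ) - v i - 1) (vals (I : Set (KK p))) = ∅ := by
  classical
  have hγsub : ∀ h ∈ stdMod p (fun i => (γ i : ℤ)), h ∈ O := stdMod_gamma_subset hγ
  obtain ⟨hstab, hgen, hfex⟩ := hI
  have hIfi : IsFracIdeal O I := ⟨hstab, hgen, hfex⟩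
  have key : ∀ w u : Fin p → ℤ, (∀ j, u j = (γ j : ℤ) - w j) →
      dualMod O (I : Set (KK p)) ⊓ stdMod p w =
        dualMod O ((I ⊔ stdMod p u : Submodule ℂ (KK p)) : Set (KK p)) := by
    intro w u hu
    rw [dualMod_sup, dualMod_stdMod hγ u]
    have heq : (fun i => (γ i : ℤ) - u i) = w := funext fun i => by rw [hu i]; ring
    rw [heq]
  rw [mem_vals_iff_submodule]
  have hDelta : DeltaSet (fun i => (γ i : ℤ) - v i - 1) (vals (I : Set (KK p))) = ∅ ↔
      ∀ i, DeltaI i (fun i => (γ i : ℤ) - v i - 1) (vals (I : Set (KK p))) = ∅ :=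
    Set.iUnion_eq_empty
  rw [hDelta]
  refine forall_congr' fun i => ?_
  set c : Fin p → ℤ := fun j => (γ j : ℤ) - v j with hc
  set ci : Fin p → ℤ := fun j => if j = i then c j - 1 else c j with hci
  have hcj : ∀ j, c j = (γ j : ℤ) - v j := fun j => by rw [hc]
  have hcij : ∀ j, ci j = if j = i then c j - 1 else c j := fun j => by rw [hci]
  have hkeyv : dualMod O (I : Set (KK p)) ⊓ stdMod p v =
      dualMod O ((I ⊔ stdMod p c : Submodule ℂ (KK p)) : Set (KK p)) :=
    key v c fun j => by rw [hcj j]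
  have hkeyi : dualMod O (I : Set (KK p)) ⊓
        stdMod p (fun j => if j = i then v j + 1 else v j) =
      dualMod O ((I ⊔ stdMod p ci : Submodule ℂ (KK p)) : Set (KK p)) := by
    refine key _ ci fun j => ?_
    rw [hcij j]
    by_cases hji : j = i
    · rw [if_pos hji, if_pos hji, hcj j]
      omega
    · rw [if_neg hji, if_neg hji, hcj j]
  have hJv := isFracIdeal_sup (γz := fun i => (γ i : ℤ)) hO hγsub hIfi c
  have hJi := isFracIdeal_sup (γz := fun i => (γ i : ℤ)) hO hγsub hIfi ci
  have hle : I ⊔ stdMod p c ≤ I ⊔ stdMod p ci := by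
    refine sup_le_sup_left (stdMod_le_stdMod fun j => ?_) _
    rw [hcij j]
    by_cases hji : j = i
    · rw [if_pos hji]; omega
    · rw [if_neg hji]
  have hdeq : (dualMod O ((I ⊔ stdMod p c : Submodule ℂ (KK p)) : Set (KK p)) ≤
      dualMod O ((I ⊔ stdMod p ci : Submodule ℂ (KK p)) : Set (KK p))) ↔
      (I ⊔ stdMod p ci : Submodule ℂ (KK p)) = I ⊔ stdMod p c := by
    constructor
    · intro hled
      have hge : dualMod O ((I ⊔ stdMod p ci : Submodule ℂ (KK p)) : Set (KK p)) ≤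
          dualMod O ((I ⊔ stdMod p c : Submodule ℂ (KK p)) : Set (KK p)) :=
        fun h hh g hg => hh g (hle hg)
      have hdd : dualMod O ((I ⊔ stdMod p ci : Submodule ℂ (KK p)) : Set (KK p)) =
          dualMod O ((I ⊔ stdMod p c : Submodule ℂ (KK p)) : Set (KK p)) :=
        le_antisymm hge hled
      rw [← hG1 _ hJi, ← hG1 _ hJv, hdd]
    · intro he
      rw [he]
  have e3 : ((I ⊔ stdMod p ci : Submodule ℂ (KK p)) = I ⊔ stdMod p c) ↔
      usingle i (c i - 1) ∈ I ⊔ stdMod p c := by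
    rw [hci]
    exact sup_eq_sup_iff I c i
  have e4 := usingle_mem_sup_iff (γz := fun i => (γ i : ℤ)) hγsub hstab hfex c i
  have e5 : (DeltaI i (fun i => (γ i : ℤ) - v i - 1) (vals (I : Set (KK p))) = ∅) ↔
      ¬ ∃ α ∈ vals (I : Set (KK p)), α i = c i - 1 ∧ ∀ j, j ≠ i → c j - 1 < α j := by
    rw [Set.eq_empty_iff_forall_notMem]
    constructor
    · rintro h ⟨α, hα1, hα2, hα3⟩
      refine h α ⟨hα1, ?_, fun j hj => ?_⟩
      · rw [hα2, hcj i]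
      · have h2 := hα3 j hj
        rw [hcj j] at h2
        show (γ j : ℤ) - v j - 1 < α j
        omega
    · intro h α hα
      obtain ⟨hα1, hα2, hα3⟩ := hα
      refine h ⟨α, hα1, ?_, fun j hj => ?_⟩
      · rw [hα2, hcj i]
      · have h2 : (γ j : ℤ) - v j - 1 < α j := hα3 j hj
        rw [hcj j]
        omega
  rw [hkeyv, hkeyi, ← SetLike.not_le_iff_exists, hdeq, e3, e4, e5]
end
end

section
/- (Λ-criterion for membership in the value set.) Let I be a fractional ideal of O and w ∈ ℤ^p. Then w ∈ val(I) if and only if Λ_i(w, val(I)) ≠ ∅ for every i ∈ {1,…,p}. -/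
open scoped Classical

set_option synthInstance.maxHeartbeats 1000000
set_option maxHeartbeats 1000000

noncomputable section

/-- **Λ-criterion for membership in the value set**: `w ∈ val(I)` iff
`Λ_i(w, val I) ≠ ∅` for every `i`. -/
theorem mem_vals_iff_lambda_nonempty {p : ℕ} (hp : 1 ≤ p) (O : Subalgebra ℂ (KK p))
    (hO : (O : Set (KK p)) ⊆ (stdMod p 0 : Set (KK p)))
    (I : Submodule ℂ (KK p)) (hI : IsFracIdeal O I) (w : Fin p → ℤ) :
    w ∈ vals (I : Set (KK p)) ↔
      ∀ i : Fin p, (LamSet i w (vals (I : Set (KK p)))).Nonempty := by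
  constructor
  · intro hw i
    exact ⟨w, hw, rfl, le_refl w⟩
  · intro H
    -- From each Λ_i, extract an element g ∈ I with coefficients below w vanishing
    -- and the i-th leading coefficient at w i nonzero.
    have key : ∀ i : Fin p, ∃ g : KK p, g ∈ I ∧
        (∀ j : Fin p, ∀ k : ℤ, k < w j → (g j).coeff k = 0) ∧
        (g i).coeff (w i) ≠ 0 := by
      intro i
      obtain ⟨α, hαv, hαi, hwα⟩ := H i
      obtain ⟨g, hgI, hgv⟩ := hαv
      have hcomp : ∀ j, g j ≠ 0 ∧ (g j).order = α j := by
        intro j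
        have := hgv j
        rw [valC] at this
        split_ifs at this with h
        · exact absurd this.symm (by simp)
        · exact ⟨h, by exact_mod_cast this⟩
      refine ⟨g, hgI, ?_, ?_⟩
      · intro j k hk
        exact HahnSeries.coeff_eq_zero_of_lt_order
          (by rw [(hcomp j).2]; exact lt_of_lt_of_le hk (hwα j))
      · have h0 := HahnSeries.coeff_order_eq_zero.not.2 (hcomp i).1
        rwa [(hcomp i).2, hαi] at h0
    -- Inductively combine these to get one element nonzero at w on a finset.
    have main : ∀ s : Finset (Fin p), ∃ g : KK p, g ∈ I ∧
        (∀ j : Fin p, ∀ k : ℤ, k < w j → (g j).coeff k = 0) ∧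
        ∀ j ∈ s, (g j).coeff (w j) ≠ 0 := by
      intro s
      induction s using Finset.induction_on with
      | empty =>
        obtain ⟨g, hgI, hg0, _⟩ := key ⟨0, hp⟩
        exact ⟨g, hgI, hg0, by simp⟩
      | @insert i s' hnotmem ih =>
        obtain ⟨g, hgI, hg0, hgs⟩ := ih
        obtain ⟨h, hhI, hh0, hhi⟩ := key i
        -- bad values of c
        set f : Fin p → ℂ := fun j => -((g j).coeff (w j)) / ((h j).coeff (w j)) with hf
        obtain ⟨c, hc⟩ := Infinite.exists_notMem_finset (Finset.image f Finset.univ)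
        refine ⟨g + c • h, ?_, ?_, ?_⟩
        · exact I.add_mem hgI (I.smul_mem c hhI)
        · intro j k hk
          simp [HahnSeries.coeff_add, HahnSeries.coeff_smul, hg0 j k hk, hh0 j k hk]
        · intro j hj
          have hcoeff : ((g + c • h) j).coeff (w j)
              = (g j).coeff (w j) + c * (h j).coeff (w j) := by
            simp [HahnSeries.coeff_add, HahnSeries.coeff_smul]
          rw [hcoeff]
          intro hzero
          -- j = i or j ∈ s'
          have hne : (h j).coeff (w j) ≠ 0 ∨ (g j).coeff (w j) ≠ 0 := by
            rcases Finset.mem_insert.1 hj with rfl | hj'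
            · exact Or.inl hhi
            · exact Or.inr (hgs j hj')
          have hhne : (h j).coeff (w j) ≠ 0 := by
            rcases hne with h1 | h1
            · exact h1
            · intro hh
              rw [hh, mul_zero, add_zero] at hzero
              exact h1 hzero
          apply hc
          apply Finset.mem_image.2 ⟨j, Finset.mem_univ j, ?_⟩
          rw [hf]
          field_simp
          linear_combination -hzero
    obtain ⟨g, hgI, hg0, hgall⟩ := main Finset.univ
    refine ⟨g, hgI, fun i => ?_⟩
    have hne : g i ≠ 0 := by
      intro h0
      exact hgall i (Finset.mem_univ i) (by rw [h0]; simp)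
    have hord : (g i).order = w i := by
      have hle : (g i).order ≤ w i :=
        HahnSeries.order_le_of_coeff_ne_zero (hgall i (Finset.mem_univ i))
      rcases lt_or_eq_of_le hle with hlt | heq
      · exact absurd (hg0 i _ hlt) (HahnSeries.coeff_order_eq_zero.not.2 hne)
      · exact heq
    rw [valC, if_neg hne, hord]
end
end

section
/- (Dimension along a chain.) Let I be a fractional ideal of O and ν, λ ∈ ℤ^p with t^ν·O~ ⊆ I ⊆ t^λ·O~. Let M ∈ ℕ and (α^{(j)})_{0 ≤ j ≤ M+1} be a finite sequence in ℤ^p with α^{(0)} = λ, α^{(M+1)} = ν, and such that for each j ∈ {0,…,M} there is i(j) ∈ {1,…,p} with α^{(j+1)} = α^{(j)} + e_{i(j)}. Then dim_ℂ(I / t^ν·O~) = Card{ j ∈ {0,…,M} : Λ_{i(j)}(α^{(j)}, val(I)) ≠ ∅ }. -/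
open scoped Classical

set_option synthInstance.maxHeartbeats 1000000
set_option maxHeartbeats 1000000

noncomputable section

/-! ### Auxiliary material for the dimension-along-a-chain theorem -/

lemma mem_stdMod {p : ℕ} {β : Fin p → ℤ} {g : KK p} :
    g ∈ stdMod p β ↔ ∀ i, ∀ j : ℤ, j < β i → (g i).coeff j = 0 := Iff.rfl

lemma stdMod_antitone {p : ℕ} {β γ : Fin p → ℤ} (h : ∀ i, β i ≤ γ i) :
    stdMod p γ ≤ stdMod p β := by
  intro g hg
  exact fun i j hj => mem_stdMod.mp hg i j (lt_of_lt_of_le hj (h i))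

/-- The coefficient-extraction linear map `g ↦ (g i).coeff k`. -/
def coeffL (p : ℕ) (i : Fin p) (k : ℤ) : KK p →ₗ[ℂ] ℂ where
  toFun g := (g i).coeff k
  map_add' a b := by simp [HahnSeries.coeff_add]
  map_smul' c a := by simp [HahnSeries.coeff_smul]

@[simp] lemma coeffL_apply {p : ℕ} (i : Fin p) (k : ℤ) (g : KK p) :
    coeffL p i k g = (g i).coeff k := rfl

lemma le_order_of_forall_lt {g : LaurentSeries ℂ} {m : ℤ} (hg : g ≠ 0)
    (h : ∀ j : ℤ, j < m → g.coeff j = 0) : m ≤ g.order := by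
  by_contra hlt
  push_neg at hlt
  exact hg (HahnSeries.coeff_order_eq_zero.mp (h _ hlt))

lemma valC_eq_coe_iff {g : LaurentSeries ℂ} {m : ℤ} :
    valC g = (m : WithTop ℤ) ↔ g ≠ 0 ∧ g.order = m := by
  unfold valC
  by_cases h : g = 0
  · simp [h]
  · simp [h, WithTop.coe_eq_coe]

/-- `N j = I ⊓ t^{α j}·O~`, the filtration along the chain. -/
def NN {p : ℕ} (I : Submodule ℂ (KK p)) (α : ℕ → Fin p → ℤ) (j : ℕ) :
    Submodule ℂ (KK p) := I ⊓ stdMod p (α j)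

/-- The image of `N j` in `K ⧸ t^ν·O~`. -/
def QQ {p : ℕ} (I : Submodule ℂ (KK p)) (ν : Fin p → ℤ) (α : ℕ → Fin p → ℤ) (j : ℕ) :
    Submodule ℂ (KK p ⧸ stdMod p ν) := (NN I α j).map (stdMod p ν).mkQ

/-- **Dimension along a chain**: `dim_ℂ (I / t^ν·O~)` counts the steps of the
chain at which `Λ_{i(j)}(α^{(j)}, val I)` is nonempty. -/
theorem dim_eq_card_lambda_steps {p : ℕ} (hp : 1 ≤ p) (O : Subalgebra ℂ (KK p))
    (hO : (O : Set (KK p)) ⊆ (stdMod p 0 : Set (KK p)))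
    (I : Submodule ℂ (KK p)) (hI : IsFracIdeal O I)
    (ν lam : Fin p → ℤ)
    (hν : (stdMod p ν : Set (KK p)) ⊆ (I : Set (KK p)))
    (hlam : (I : Set (KK p)) ⊆ (stdMod p lam : Set (KK p)))
    (M : ℕ) (α : ℕ → Fin p → ℤ) (ii : ℕ → Fin p)
    (hα0 : α 0 = lam) (hαlast : α (M + 1) = ν)
    (hstep : ∀ j ≤ M, α (j + 1) = α j + Pi.single (ii j) 1) :
    qdim (stdMod p ν) I =
      ((Finset.range (M + 1)).filter
        (fun j => (LamSet (ii j) (α j) (vals (I : Set (KK p)))).Nonempty)).card := by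
  classical
  -- step identity, coordinatewise
  have hstep' : ∀ j, j ≤ M → ∀ i, α (j + 1) i = α j i + if i = ii j then 1 else 0 := by
    intro j hj i
    rw [hstep j hj]
    simp [Pi.single_apply]
  have hsplit : ∀ j, j ≤ M → ∀ i,
      (i = ii j ∧ α (j + 1) i = α j i + 1) ∨ (i ≠ ii j ∧ α (j + 1) i = α j i) := by
    intro j hj i
    have h2 := hstep' j hj i
    by_cases hc : i = ii j
    · exact Or.inl ⟨hc, by simpa [hc] using h2⟩
    · exact Or.inr ⟨hc, by simpa [hc] using h2⟩
  -- monotonicity of the chain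
  have hmono : ∀ k, k ≤ M + 1 → ∀ j, j ≤ k → ∀ i, α j i ≤ α k i := by
    intro k
    induction k with
    | zero =>
      intro _ j hj i
      obtain rfl : j = 0 := Nat.le_zero.mp hj
      exact le_rfl
    | succ n ih =>
      intro hk j hj i
      rcases eq_or_lt_of_le hj with rfl | hlt
      · exact le_rfl
      · have h1 := ih (by omega) j (by omega) i
        rcases hsplit n (by omega) i with ⟨_, h2⟩ | ⟨_, h2⟩ <;> omega
  have hαν : ∀ j, j ≤ M + 1 → ∀ i, α j i ≤ ν i := by
    intro j hj i
    have := hmono (M + 1) le_rfl j hj i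
    rwa [hαlast] at this
  -- the filtration step
  have hNstep : ∀ j, j ≤ M →
      NN I α j ⊓ LinearMap.ker (coeffL p (ii j) (α j (ii j))) = NN I α (j + 1) := by
    intro j hj
    ext g
    simp only [NN, Submodule.mem_inf, LinearMap.mem_ker, coeffL_apply]
    constructor
    · rintro ⟨⟨hgI, hgs⟩, hk⟩
      refine ⟨hgI, mem_stdMod.mpr fun i k hkk => ?_⟩
      rcases hsplit j hj i with ⟨hc, h2⟩ | ⟨hc, h2⟩
      · rcases lt_or_eq_of_le (show k ≤ α j i by omega) with hlt | heq
        · exact mem_stdMod.mp hgs i k hlt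
        · rw [heq, hc]; exact hk
      · exact mem_stdMod.mp hgs i k (by omega)
    · rintro ⟨hgI, hgs⟩
      refine ⟨⟨hgI, mem_stdMod.mpr fun i k hkk => mem_stdMod.mp hgs i k ?_⟩, ?_⟩
      · rcases hsplit j hj i with ⟨_, h2⟩ | ⟨_, h2⟩ <;> omega
      · refine mem_stdMod.mp hgs (ii j) _ ?_
        rcases hsplit j hj (ii j) with ⟨_, h2⟩ | ⟨hc, _⟩
        · omega
        · exact absurd rfl hc
  -- `S = t^ν O~` lies in the kernel of each step functional
  have hker : ∀ j, j ≤ M →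
      stdMod p ν ≤ LinearMap.ker (coeffL p (ii j) (α j (ii j))) := by
    intro j hj g hg
    have hlt : α j (ii j) < ν (ii j) := by
      have h1 := hαν (j + 1) (by omega) (ii j)
      rcases hsplit j hj (ii j) with ⟨_, h2⟩ | ⟨hc, _⟩
      · omega
      · exact absurd rfl hc
    exact LinearMap.mem_ker.mpr (mem_stdMod.mp hg (ii j) _ hlt)
  -- descend the step functionals to the quotient
  obtain ⟨φb, hφbq⟩ : ∃ φb : ℕ → ((KK p ⧸ stdMod p ν) →ₗ[ℂ] ℂ),
      ∀ j, j ≤ M → ∀ g : KK p,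
        φb j ((stdMod p ν).mkQ g) = (g (ii j)).coeff (α j (ii j)) := by
    refine ⟨fun j => (stdMod p ν).liftQ
      (if h : j ≤ M then coeffL p (ii j) (α j (ii j)) else 0)
      (by
        by_cases h : j ≤ M
        · rw [dif_pos h]; exact hker j h
        · rw [dif_neg h]; simp), ?_⟩
    intro j hj g
    rw [Submodule.mkQ_apply, Submodule.liftQ_apply, dif_pos hj, coeffL_apply]
  -- endpoints of the filtration
  have hN0 : NN I α 0 = I := by
    rw [NN, hα0]
    exact inf_eq_left.mpr fun x hx => hlam hx
  have hNlast : NN I α (M + 1) = stdMod p ν := by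
    rw [NN, hαlast]
    exact inf_eq_right.mpr fun x hx => hν hx
  have hQlast : QQ I ν α (M + 1) = ⊥ := by
    rw [QQ, hNlast]
    refine (Submodule.eq_bot_iff _).mpr ?_
    rintro y ⟨x, hx, rfl⟩
    simpa [Submodule.mkQ_apply] using (Submodule.Quotient.mk_eq_zero (stdMod p ν)).mpr hx
  have hQle : ∀ j, QQ I ν α j ≤ QQ I ν α 0 := by
    intro j
    apply Submodule.map_mono
    rw [hN0]
    exact inf_le_left
  -- finite-dimensionality of `I / t^ν O~`
  have hfinQ0 : FiniteDimensional ℂ (QQ I ν α 0) := by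
    set Ψ : (KK p ⧸ stdMod p ν) →ₗ[ℂ] (Fin (M + 1) → ℂ) :=
      LinearMap.pi (fun j : Fin (M + 1) => φb j) with hΨ
    refine FiniteDimensional.of_injective (Ψ.domRestrict (QQ I ν α 0)) ?_
    rw [← LinearMap.ker_eq_bot]
    refine (Submodule.eq_bot_iff _).mpr ?_
    rintro ⟨y, hy⟩ hk0
    rw [LinearMap.mem_ker, LinearMap.domRestrict_apply] at hk0
    obtain ⟨g, hgN, rfl⟩ := hy
    have hΨg : ∀ j : Fin (M + 1), φb j ((stdMod p ν).mkQ g) = 0 := by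
      intro j
      have := congrFun hk0 j
      simpa [hΨ, LinearMap.pi_apply] using this
    have hmem : ∀ j, j ≤ M + 1 → g ∈ NN I α j := by
      intro j
      induction j with
      | zero => intro _; exact hgN
      | succ n ih =>
        intro hn
        have hnM : n ≤ M := by omega
        rw [← hNstep n hnM]
        refine Submodule.mem_inf.mpr ⟨ih (by omega), LinearMap.mem_ker.mpr ?_⟩
        rw [coeffL_apply, ← hφbq n hnM g]
        exact hΨg ⟨n, by omega⟩
    have hgS : g ∈ stdMod p ν := by
      have := hmem (M + 1) le_rfl
      rwa [hNlast] at this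
    exact Subtype.ext ((Submodule.Quotient.mk_eq_zero (stdMod p ν)).mpr hgS)
  haveI := hfinQ0
  have hfinQ : ∀ j, FiniteDimensional ℂ (QQ I ν α j) :=
    fun j => Submodule.finiteDimensional_of_le (hQle j)
  -- the step is nontrivial iff the corresponding `Λ` is nonempty
  have hgood_iff : ∀ j, j ≤ M →
      ((LamSet (ii j) (α j) (vals (I : Set (KK p)))).Nonempty ↔
        ∃ g ∈ NN I α j, (g (ii j)).coeff (α j (ii j)) ≠ 0) := by
    intro j hj
    constructor
    · rintro ⟨v, hv⟩
      obtain ⟨hvM, hvi, hvle⟩ := hv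
      obtain ⟨g, hgI, hval⟩ := hvM
      have hcomp : ∀ i, g i ≠ 0 ∧ (g i).order = v i := fun i => valC_eq_coe_iff.mp (hval i)
      refine ⟨g, Submodule.mem_inf.mpr ⟨hgI, mem_stdMod.mpr fun i k hk => ?_⟩, ?_⟩
      · apply HahnSeries.coeff_eq_zero_of_lt_order
        rw [(hcomp i).2]
        exact lt_of_lt_of_le hk (hvle i)
      · have h2 : (g (ii j)).order = α j (ii j) := by rw [(hcomp (ii j)).2, hvi]
        rw [← h2]
        exact fun h0 => (hcomp (ii j)).1 (HahnSeries.coeff_order_eq_zero.mp h0)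
    · rintro ⟨g, hgN, hgc⟩
      obtain ⟨hgI, hgs⟩ := Submodule.mem_inf.mp hgN
      have hgs' := mem_stdMod.mp hgs
      have hgne : g (ii j) ≠ 0 := HahnSeries.ne_zero_of_coeff_ne_zero hgc
      set h : KK p := fun i =>
        if g i = 0 then HahnSeries.single (max (ν i) (α j i)) (1 : ℂ) else 0 with hh
      have hhS : h ∈ stdMod p ν := by
        refine mem_stdMod.mpr fun i k hk => ?_
        by_cases h0 : g i = 0
        · simp only [hh, if_pos h0, HahnSeries.coeff_single]
          have hlt : k < max (ν i) (α j i) := lt_of_lt_of_le hk (le_max_left _ _)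
          rw [if_neg (ne_of_lt hlt)]
        · simp [hh, h0]
      set v : Fin p → ℤ := fun i => if g i = 0 then max (ν i) (α j i) else (g i).order with hv
      have horder : (g (ii j)).order = α j (ii j) :=
        le_antisymm (HahnSeries.order_le_of_coeff_ne_zero hgc)
          (le_order_of_forall_lt hgne (fun k hk => hgs' (ii j) k hk))
      refine ⟨v, ⟨g + h, I.add_mem hgI (hν hhS), ?_⟩, ?_, ?_⟩
      · intro i
        by_cases h0 : g i = 0
        · have hgh : (g + h) i = HahnSeries.single (max (ν i) (α j i)) (1 : ℂ) := by
            simp [hh, h0]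
          rw [hgh]
          refine valC_eq_coe_iff.mpr ⟨HahnSeries.single_ne_zero one_ne_zero, ?_⟩
          rw [HahnSeries.order_single one_ne_zero]
          simp [hv, h0]
        · have hgh : (g + h) i = g i := by simp [hh, h0]
          rw [hgh]
          exact valC_eq_coe_iff.mpr ⟨h0, by simp [hv, h0]⟩
      · simp [hv, hgne, horder]
      · intro i
        by_cases h0 : g i = 0
        · simp only [hv, if_pos h0]
          exact le_max_right _ _
        · simp only [hv, if_neg h0]
          exact le_order_of_forall_lt h0 (fun k hk => hgs' i k hk)
  -- the filtration step in the quotient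
  have hQstep : ∀ j, j ≤ M →
      QQ I ν α j ⊓ LinearMap.ker (φb j) = QQ I ν α (j + 1) := by
    intro j hj
    ext y
    simp only [QQ, Submodule.mem_inf, LinearMap.mem_ker, Submodule.mem_map]
    constructor
    · rintro ⟨⟨g, hgN, rfl⟩, hky⟩
      rw [hφbq j hj g] at hky
      refine ⟨g, ?_, rfl⟩
      rw [← hNstep j hj]
      exact Submodule.mem_inf.mpr ⟨hgN, LinearMap.mem_ker.mpr (by simpa using hky)⟩
    · rintro ⟨g, hgN, rfl⟩
      rw [← hNstep j hj] at hgN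
      obtain ⟨h1, h2⟩ := Submodule.mem_inf.mp hgN
      refine ⟨⟨g, h1, rfl⟩, ?_⟩
      rw [hφbq j hj g]
      simpa using h2
  -- one step of the dimension count
  have hstepdim : ∀ j, j ≤ M →
      Module.finrank ℂ (QQ I ν α j) = Module.finrank ℂ (QQ I ν α (j + 1)) +
        (if (LamSet (ii j) (α j) (vals (I : Set (KK p)))).Nonempty then 1 else 0) := by
    intro j hj
    haveI := hfinQ j
    have hrn := LinearMap.finrank_range_add_finrank_ker ((φb j).domRestrict (QQ I ν α j))
    have hQj1le : QQ I ν α (j + 1) ≤ QQ I ν α j := by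
      rw [← hQstep j hj]; exact inf_le_left
    have hker_eq : LinearMap.ker ((φb j).domRestrict (QQ I ν α j)) =
        Submodule.comap (QQ I ν α j).subtype (QQ I ν α (j + 1)) := by
      rw [LinearMap.ker_domRestrict, ← hQstep j hj, Submodule.comap_inf,
        Submodule.comap_subtype_self, top_inf_eq]
    have hkfr : Module.finrank ℂ (LinearMap.ker ((φb j).domRestrict (QQ I ν α j))) =
        Module.finrank ℂ (QQ I ν α (j + 1)) := by
      rw [hker_eq]
      have h5 := Submodule.finrank_map_subtype_eq (QQ I ν α j)
        (Submodule.comap (QQ I ν α j).subtype (QQ I ν α (j + 1)))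
      rw [Submodule.map_comap_subtype, inf_eq_right.mpr hQj1le] at h5
      exact h5.symm
    have hrfr : Module.finrank ℂ (LinearMap.range ((φb j).domRestrict (QQ I ν α j))) =
        (if (LamSet (ii j) (α j) (vals (I : Set (KK p)))).Nonempty then 1 else 0) := by
      rw [LinearMap.range_domRestrict]
      by_cases hg : (LamSet (ii j) (α j) (vals (I : Set (KK p)))).Nonempty
      · rw [if_pos hg]
        obtain ⟨g, hgN, hgc⟩ := (hgood_iff j hj).mp hg
        have hc : (g (ii j)).coeff (α j (ii j)) ∈ (QQ I ν α j).map (φb j) :=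
          ⟨(stdMod p ν).mkQ g, ⟨g, hgN, rfl⟩, hφbq j hj g⟩
        have htop : (QQ I ν α j).map (φb j) = ⊤ := by
          refine Submodule.eq_top_iff'.mpr fun x => ?_
          have h6 := Submodule.smul_mem _ (x * ((g (ii j)).coeff (α j (ii j)))⁻¹) hc
          simpa [smul_eq_mul, mul_assoc, inv_mul_cancel₀ hgc] using h6
        rw [htop, finrank_top, Module.finrank_self]
      · rw [if_neg hg]
        have hbot : (QQ I ν α j).map (φb j) = ⊥ := by
          refine (Submodule.eq_bot_iff _).mpr ?_
          rintro x ⟨y, hy, rfl⟩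
          obtain ⟨g, hgN, rfl⟩ := hy
          rw [hφbq j hj g]
          by_contra hne
          exact hg ((hgood_iff j hj).mpr ⟨g, hgN, hne⟩)
        rw [hbot, finrank_bot]
    rw [hrfr, hkfr] at hrn
    omega
  -- downward induction along the chain
  have hcount : ∀ d, d ≤ M + 1 →
      Module.finrank ℂ (QQ I ν α (M + 1 - d)) =
        ((Finset.Ico (M + 1 - d) (M + 1)).filter
          (fun j => (LamSet (ii j) (α j) (vals (I : Set (KK p)))).Nonempty)).card := by
    intro d
    induction d with
    | zero =>
      intro _
      simp [hQlast]
    | succ n ih =>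
      intro hn
      have hj : M + 1 - (n + 1) = M - n := by omega
      have hj1 : M + 1 - n = (M - n) + 1 := by omega
      have hjM : M - n ≤ M := by omega
      have ih' := ih (by omega)
      rw [hj1] at ih'
      rw [hj, hstepdim (M - n) hjM, ih']
      have hlt : M - n < M + 1 := by omega
      rw [Finset.card_filter, Finset.card_filter, Finset.sum_eq_sum_Ico_succ_bot hlt]
      rw [add_comm]
  -- conclusion
  have hfinal := hcount (M + 1) le_rfl
  rw [show M + 1 - (M + 1) = 0 from by omega] at hfinal
  have hq0 : QQ I ν α 0 = Submodule.map (Submodule.mkQ (stdMod p ν)) I := by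
    rw [QQ, hN0]
  calc qdim (stdMod p ν) I = Module.finrank ℂ (QQ I ν α 0) := by rw [qdim, hq0]
    _ = _ := by rw [hfinal, Finset.range_eq_Ico]
end
end

section
/- (Λ-duality.) For every fractional ideal I of O, every w ∈ ℤ^p and every i ∈ {1,…,p}: Λ_i(w, val(I^∨)) ≠ ∅ if and only if Λ_i(γ − w − e_i, val(I)) = ∅. -/
open scoped Classical

set_option synthInstance.maxHeartbeats 1000000
set_option maxHeartbeats 1000000

noncomputable section

namespace LambdaAux

open HahnSeries

variable {p : ℕ}

lemma mem_stdMod {x : KK p} {c : Fin p → ℤ} :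
    x ∈ stdMod p c ↔ ∀ i, ∀ j : ℤ, j < c i → (x i).coeff j = 0 := Iff.rfl

lemma lb_iff {x : LaurentSeries ℂ} {c : ℤ} :
    (∀ j : ℤ, j < c → x.coeff j = 0) ↔ (x ≠ 0 → c ≤ x.order) := by
  constructor
  · intro h hx
    by_contra hlt
    push_neg at hlt
    exact (HahnSeries.coeff_order_eq_zero.not.mpr hx) (h _ hlt)
  · intro h j hj
    by_cases hx : x = 0
    · simp [hx]
    · exact HahnSeries.coeff_eq_zero_of_lt_order (lt_of_lt_of_le hj (h hx))

lemma mem_stdMod_iff {x : KK p} {c : Fin p → ℤ} :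
    x ∈ stdMod p c ↔ ∀ i, x i ≠ 0 → c i ≤ (x i).order := by
  rw [mem_stdMod]
  exact forall_congr' fun i => lb_iff

lemma stdMod_antitone {c c' : Fin p → ℤ} (h : c ≤ c') : stdMod p c' ≤ stdMod p c :=
  fun _ hx => mem_stdMod.mpr fun i j hj => mem_stdMod.mp hx i j (lt_of_lt_of_le hj (h i))

lemma stdMod_mul {α β : Fin p → ℤ} {x y : KK p} (hx : x ∈ stdMod p α)
    (hy : y ∈ stdMod p β) : x * y ∈ stdMod p (α + β) := by
  rw [mem_stdMod_iff] at *
  intro i hne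
  have hxy : (x * y) i = x i * y i := rfl
  rw [hxy] at hne ⊢
  have hx0 : x i ≠ 0 := fun h => hne (by rw [h, zero_mul])
  have hy0 : y i ≠ 0 := fun h => hne (by rw [h, mul_zero])
  rw [HahnSeries.order_mul hx0 hy0]
  exact add_le_add (hx i hx0) (hy i hy0)

lemma one_mem_stdMod0 : (1 : KK p) ∈ stdMod p 0 := by
  intro i j hj
  have : (1 : KK p) i = 1 := rfl
  rw [this, HahnSeries.coeff_one, if_neg]
  exact fun h => absurd hj (by simp [h])

lemma tvec_mem {c u : Fin p → ℤ} (h : c ≤ u) :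
    (fun k => HahnSeries.single (u k) (1 : ℂ)) ∈ stdMod p c := by
  intro i j hj
  exact HahnSeries.coeff_single_of_ne (by have h2 : c i ≤ u i := h i; omega)

lemma mem_dualMod {O : Subalgebra ℂ (KK p)} {S : Set (KK p)} {x : KK p} :
    x ∈ dualMod O S ↔ ∀ g ∈ S, x * g ∈ O := Iff.rfl

variable {O : Subalgebra ℂ (KK p)} {γ : Fin p → ℕ}

lemma stdModγ_le_O (hγ : dualMod O (stdMod p 0 : Set (KK p)) = stdMod p (fun i => (γ i : ℤ)))
    {x : KK p} (hx : x ∈ stdMod p (fun i => (γ i : ℤ))) : x ∈ O := by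
  rw [← hγ] at hx
  simpa using hx 1 one_mem_stdMod0

lemma dual_stdMod (hγ : dualMod O (stdMod p 0 : Set (KK p)) = stdMod p (fun i => (γ i : ℤ)))
    (c : Fin p → ℤ) :
    dualMod O (stdMod p c : Set (KK p)) = stdMod p (fun k => (γ k : ℤ) - c k) := by
  ext x
  constructor
  · intro hx
    have h1 : x * (fun k => HahnSeries.single (c k) (1 : ℂ)) ∈ stdMod p (fun i => (γ i : ℤ)) := by
      rw [← hγ]
      intro u hu
      rw [mul_assoc]
      refine hx _ ?_
      have h2 := stdMod_mul (tvec_mem (le_refl c)) (hu : u ∈ stdMod p 0)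
      simpa using h2
    rw [mem_stdMod_iff] at h1 ⊢
    intro i hxi
    have hsne : HahnSeries.single (c i) (1 : ℂ) ≠ 0 := HahnSeries.single_ne_zero one_ne_zero
    have hne : (x * (fun k => HahnSeries.single (c k) (1 : ℂ))) i ≠ 0 := mul_ne_zero hxi hsne
    have h3 := h1 i hne
    have h4 : (x * (fun k => HahnSeries.single (c k) (1 : ℂ))) i
        = x i * HahnSeries.single (c i) (1 : ℂ) := rfl
    rw [h4, HahnSeries.order_mul hxi hsne, HahnSeries.order_single one_ne_zero] at h3
    omega
  · intro hx g hg
    have h2 := stdMod_mul hx (hg : g ∈ stdMod p c)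
    have he : ((fun k => (γ k : ℤ) - c k) + c) = fun k => (γ k : ℤ) := by
      funext k; simp
    rw [he] at h2
    exact stdModγ_le_O hγ h2

lemma dual_sup (A B : Submodule ℂ (KK p)) :
    dualMod O ((A ⊔ B : Submodule ℂ (KK p)) : Set (KK p))
      = dualMod O (A : Set (KK p)) ⊓ dualMod O (B : Set (KK p)) := by
  ext x
  simp only [Submodule.mem_inf, mem_dualMod]
  constructor
  · intro h
    exact ⟨fun g hg => h g (Submodule.mem_sup_left hg),
           fun g hg => h g (Submodule.mem_sup_right hg)⟩
  · rintro ⟨h1, h2⟩ g hg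
    rcases Submodule.mem_sup.mp hg with ⟨a, ha, b, hb, rfl⟩
    rw [mul_add]
    exact O.add_mem (h1 a ha) (h2 b hb)

lemma dual_stable {S : Set (KK p)} {a : KK p} (ha : a ∈ O) {x : KK p}
    (hx : x ∈ dualMod O S) : a * x ∈ dualMod O S := by
  intro g hg
  rw [mul_assoc]
  exact O.mul_mem ha (hx g hg)

/-- The set of `O`-combinations of elements of `s`. -/
def OSpan (O : Subalgebra ℂ (KK p)) (s : Finset (KK p)) : Submodule ℂ (KK p) where
  carrier := {x | ∃ a : KK p → KK p, (∀ g ∈ s, a g ∈ O) ∧ x = ∑ g ∈ s, a g * g}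
  add_mem' := by
    rintro x y ⟨a, ha, rfl⟩ ⟨b, hb, rfl⟩
    refine ⟨fun g => a g + b g, fun g hg => O.add_mem (ha g hg) (hb g hg), ?_⟩
    rw [← Finset.sum_add_distrib]
    exact Finset.sum_congr rfl fun g _ => (add_mul _ _ _).symm
  zero_mem' := ⟨0, fun g _ => O.zero_mem, by simp⟩
  smul_mem' := by
    rintro c x ⟨a, ha, rfl⟩
    refine ⟨fun g => algebraMap ℂ (KK p) c * a g,
      fun g hg => O.mul_mem (O.algebraMap_mem c) (ha g hg), ?_⟩
    rw [Finset.smul_sum]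
    refine Finset.sum_congr rfl fun g _ => ?_
    rw [smul_eq_algebraMap_mul, mul_assoc]

lemma OSpan_mul_gen {s : Finset (KK p)} {g : KK p} (hg : g ∈ s) {b : KK p} (hb : b ∈ O) :
    b * g ∈ OSpan O s := by
  refine ⟨fun h => if h = g then b else 0, fun h _ => ?_, ?_⟩
  · dsimp only; split
    · exact hb
    · exact O.zero_mem
  · have h1 : ∀ h ∈ s, (if h = g then b else 0) * h = if h = g then b * h else 0 :=
      fun h _ => by split <;> simp
    rw [Finset.sum_congr rfl h1, Finset.sum_ite_eq' s g fun h => b * h, if_pos hg]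

lemma OSpan_mono {s s' : Finset (KK p)} (h : s ⊆ s') : OSpan O s ≤ OSpan O s' := by
  rintro x ⟨a, ha, rfl⟩
  refine ⟨fun g => if g ∈ s then a g else 0, fun g _ => ?_, ?_⟩
  · dsimp only; split
    · exact ha _ ‹_›
    · exact O.zero_mem
  · rw [← Finset.sum_subset h (fun g _ hns => by simp [hns])]
    exact Finset.sum_congr rfl fun g hg => by simp [hg]

/-- The standard "monomial" element `ε_i t^k`. -/
def es (i : Fin p) (k : ℤ) : KK p := Pi.single i (HahnSeries.single k 1)

lemma es_mem_stdMod {i : Fin p} {k : ℤ} {a : Fin p → ℤ} (h : a i ≤ k) :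
    es i k ∈ stdMod p a := by
  intro j m hm
  rcases eq_or_ne j i with rfl | hne
  · rw [show es j k j = HahnSeries.single k 1 from Pi.single_eq_same _ _]
    exact HahnSeries.coeff_single_of_ne (by omega)
  · rw [show es i k j = 0 from Pi.single_eq_of_ne hne _]
    rfl

lemma coeff_sum {β : Type*} {s : Finset β} {f : β → LaurentSeries ℂ} {n : ℤ} :
    (∑ k ∈ s, f k).coeff n = ∑ k ∈ s, (f k).coeff n := by
  classical
  induction s using Finset.induction with
  | empty => simp
  | insert _ _ hni ih => rw [Finset.sum_insert ‹_›, Finset.sum_insert ‹_›, HahnSeries.coeff_add, ih]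

lemma stdMod_fg (hγ : dualMod O (stdMod p 0 : Set (KK p)) = stdMod p (fun i => (γ i : ℤ)))
    (a : Fin p → ℤ) :
    ∃ s : Finset (KK p), ↑s ⊆ (stdMod p a : Set (KK p)) ∧ stdMod p a ≤ OSpan O s := by
  refine ⟨Finset.univ.biUnion
      (fun i => (Finset.Icc (a i) (a i + γ i)).image (fun k => es i k)), ?_, ?_⟩
  · intro g hg
    rw [Finset.mem_coe, Finset.mem_biUnion] at hg
    obtain ⟨i, -, hg⟩ := hg
    rw [Finset.mem_image] at hg
    obtain ⟨k, hk, rfl⟩ := hg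
    exact es_mem_stdMod (Finset.mem_Icc.mp hk).1
  · intro x hx
    set lowp : Fin p → LaurentSeries ℂ :=
      fun i => ∑ k ∈ Finset.Ico (a i) (a i + γ i), HahnSeries.single k ((x i).coeff k) with hlowp
    set sv : Fin p → KK p :=
      fun i => Pi.single i (HahnSeries.single (-(a i)) 1 * (x i - lowp i)) with hsv
    have hlow_coeff : ∀ i (n : ℤ), (lowp i).coeff n
        = if n ∈ Finset.Ico (a i) (a i + γ i) then (x i).coeff n else 0 := by
      intro i n
      rw [hlowp]
      dsimp only
      rw [coeff_sum]
      by_cases hmem : n ∈ Finset.Ico (a i) (a i + γ i)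
      · rw [if_pos hmem,
          Finset.sum_eq_single_of_mem n hmem
            (fun k _ hk => HahnSeries.coeff_single_of_ne (Ne.symm hk)),
          HahnSeries.coeff_single_same]
      · rw [if_neg hmem]
        exact Finset.sum_eq_zero fun k hk =>
          HahnSeries.coeff_single_of_ne fun h => hmem (h ▸ hk)
    have hxl : ∀ i (n : ℤ), n < a i + γ i → (x i - lowp i).coeff n = 0 := by
      intro i n hn
      rw [HahnSeries.coeff_sub, hlow_coeff]
      by_cases h1 : n ∈ Finset.Ico (a i) (a i + γ i)
      · rw [if_pos h1, sub_self]
      · rw [if_neg h1, sub_zero]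
        refine mem_stdMod.mp hx i n ?_
        rw [Finset.mem_Ico] at h1
        omega
    have hsvO : ∀ i, sv i ∈ O := by
      intro i
      refine stdModγ_le_O hγ ?_
      intro j m hm
      have hm' : m < (γ j : ℤ) := hm
      rcases eq_or_ne j i with rfl | hne
      · rw [hsv]
        dsimp only
        rw [Pi.single_eq_same]
        have hme : m = (m + a j) + (-(a j)) := by ring
        rw [hme, HahnSeries.coeff_single_mul_add, one_mul]
        exact hxl j _ (by omega)
      · rw [show sv i j = 0 from Pi.single_eq_of_ne hne _]
        rfl
    have hid : x = (∑ i : Fin p, ∑ k ∈ Finset.Ico (a i) (a i + γ i),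
          algebraMap ℂ (KK p) ((x i).coeff k) * es i k)
        + ∑ i : Fin p, sv i * es i (a i) := by
      funext l
      rw [Pi.add_apply, Finset.sum_apply, Finset.sum_apply]
      rw [Finset.sum_eq_single_of_mem l (Finset.mem_univ l)
        (fun i _ hil => by
          rw [Finset.sum_apply]
          refine Finset.sum_eq_zero fun k _ => ?_
          rw [Pi.mul_apply, show es i k l = 0 from Pi.single_eq_of_ne (Ne.symm hil) _, mul_zero])]
      rw [Finset.sum_eq_single_of_mem l (Finset.mem_univ l)
        (fun i _ hil => by
          rw [Pi.mul_apply, show es i (a i) l = 0 from Pi.single_eq_of_ne (Ne.symm hil) _,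
            mul_zero])]
      rw [Finset.sum_apply]
      have hterm : ∀ k ∈ Finset.Ico (a l) (a l + γ l),
          (algebraMap ℂ (KK p) ((x l).coeff k) * es l k) l
            = HahnSeries.single k ((x l).coeff k) := by
        intro k _
        rw [Pi.mul_apply, algebraMap_component,
          show es l k l = HahnSeries.single k 1 from Pi.single_eq_same _ _,
          HahnSeries.single_mul_single, zero_add, mul_one]
      rw [Finset.sum_congr rfl hterm]
      have hsvl : (sv l * es l (a l)) l = x l - lowp l := by
        rw [Pi.mul_apply, hsv]
        dsimp only
        rw [Pi.single_eq_same, show es l (a l) l = HahnSeries.single (a l) 1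
            from Pi.single_eq_same _ _]
        rw [mul_right_comm, HahnSeries.single_mul_single, neg_add_cancel, one_mul,
          HahnSeries.single_zero_one, one_mul]
      rw [hsvl, hlowp]
      dsimp only
      rw [add_sub_cancel]
    rw [hid]
    refine Submodule.add_mem _ (Submodule.sum_mem _ fun i _ => Submodule.sum_mem _ fun k hk => ?_)
      (Submodule.sum_mem _ fun i _ => ?_)
    · refine OSpan_mul_gen ?_ (O.algebraMap_mem _)
      rw [Finset.mem_biUnion]
      refine ⟨i, Finset.mem_univ i, Finset.mem_image.mpr ⟨k, ?_, rfl⟩⟩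
      rw [Finset.mem_Ico] at hk
      rw [Finset.mem_Icc]
      omega
    · refine OSpan_mul_gen ?_ (hsvO i)
      rw [Finset.mem_biUnion]
      refine ⟨i, Finset.mem_univ i, Finset.mem_image.mpr ⟨a i, ?_, rfl⟩⟩
      rw [Finset.mem_Icc]
      omega

lemma sub_smul_mem {x g : KK p} {w : Fin p → ℤ} {i : Fin p}
    (hx : x ∈ stdMod p w) (hg : g ∈ stdMod p w) (hgc : (g i).coeff (w i) ≠ 0) :
    x - ((x i).coeff (w i) * ((g i).coeff (w i))⁻¹) • g ∈ stdMod p (w + Pi.single i 1) := by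
  intro j m hm
  have hws : ((w + Pi.single i 1) : Fin p → ℤ) j = w j + (if j = i then 1 else 0) := by
    rw [Pi.add_apply, Pi.single_apply]
  rw [hws] at hm
  have hco : (x - ((x i).coeff (w i) * ((g i).coeff (w i))⁻¹) • g) j
      = x j - ((x i).coeff (w i) * ((g i).coeff (w i))⁻¹) • g j := rfl
  rw [hco, HahnSeries.coeff_sub, HahnSeries.coeff_smul, smul_eq_mul]
  rcases eq_or_ne j i with rfl | hne
  · rw [if_pos rfl] at hm
    rcases lt_or_eq_of_le (Int.lt_add_one_iff.mp hm) with hlt | heq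
    · rw [hx j m hlt, hg j m hlt, mul_zero, sub_zero]
    · subst heq
      rw [mul_assoc, inv_mul_cancel₀ hgc, mul_one, sub_self]
  · rw [if_neg hne, add_zero] at hm
    rw [hx j m hm, hg j m hm, mul_zero, sub_zero]

lemma fg_sandwich (hγ : dualMod O (stdMod p 0 : Set (KK p)) = stdMod p (fun i => (γ i : ℤ))) :
    ∀ (n : ℕ) (a b : Fin p → ℤ) (M : Submodule ℂ (KK p)), b ≤ a →
      (∑ i, (a i - b i).toNat) ≤ n → stdMod p a ≤ M → M ≤ stdMod p b →
      ∃ s : Finset (KK p), ↑s ⊆ (M : Set (KK p)) ∧ M ≤ OSpan O s := by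
  intro n
  induction n with
  | zero =>
    intro a b M hba hsum hl hu
    have hz : ∀ i ∈ Finset.univ, (a i - b i).toNat = 0 :=
      Finset.sum_eq_zero_iff.mp (Nat.le_zero.mp hsum)
    have hab : a = b := funext fun i => by
      have h1 : b i ≤ a i := hba i
      have h2 := hz i (Finset.mem_univ i)
      omega
    have hM : M = stdMod p b := le_antisymm hu (hab ▸ hl)
    rw [hM]
    exact stdMod_fg hγ b
  | succ n ih =>
    intro a b M hba hsum hl hu
    by_cases hab : a = b
    · have hM : M = stdMod p b := le_antisymm hu (hab ▸ hl)
      rw [hM]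
      exact stdMod_fg hγ b
    · have hex : ∃ i, b i < a i := by
        by_contra hcon
        push_neg at hcon
        exact hab (funext fun i => le_antisymm (hcon i) (hba i))
      obtain ⟨i, hi⟩ := hex
      set b' : Fin p → ℤ := b + Pi.single i 1 with hb'
      have hb'app : ∀ j, b' j = b j + (if j = i then 1 else 0) := fun j => by
        rw [hb', Pi.add_apply, Pi.single_apply]
      have hb'le : b' ≤ a := fun j => by
        have h1 : b j ≤ a j := hba j
        refine (hb'app j).trans_le ?_
        rcases eq_or_ne j i with rfl | hne
        · rw [if_pos rfl]; omega
        · rw [if_neg hne]; omega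
      have hb'b : b ≤ b' := fun j => by
        have h3 : b j ≤ b j + (if j = i then 1 else 0 : ℤ) := by split <;> omega
        exact le_of_le_of_eq h3 (hb'app j).symm
      have hsum' : (∑ j, (a j - b' j).toNat) ≤ n := by
        have key : (∑ j, (a j - b j).toNat) = (∑ j, (a j - b' j).toNat) + 1 := by
          rw [← Finset.sum_compl_add_sum {i} (fun j => (a j - b j).toNat),
            ← Finset.sum_compl_add_sum {i} (fun j => (a j - b' j).toNat)]
          have hc : ∀ j ∈ ({i} : Finset (Fin p))ᶜ, (a j - b' j).toNat = (a j - b j).toNat := by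
            intro j hj
            have hne : j ≠ i := by simpa using hj
            rw [hb'app j, if_neg hne]
            simp
          rw [Finset.sum_congr rfl hc]
          have hsing : ∀ (f : Fin p → ℕ), ∑ j ∈ ({i} : Finset (Fin p)), f j = f i :=
            fun f => Finset.sum_singleton f i
          rw [hsing, hsing]
          have h2 : b' i = b i + 1 := by rw [hb'app i, if_pos rfl]
          rw [h2]
          omega
        omega
      have hl' : stdMod p a ≤ M ⊓ stdMod p b' := le_inf hl (stdMod_antitone hb'le)
      obtain ⟨s', hs'sub, hs'span⟩ := ih a b' (M ⊓ stdMod p b') hb'le hsum' hl' inf_le_right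
      by_cases hg : ∃ g ∈ M, (g i).coeff (b i) ≠ 0
      · obtain ⟨g, hgM, hgc⟩ := hg
        refine ⟨insert g s', ?_, ?_⟩
        · intro y hy
          rw [Finset.coe_insert, Set.mem_insert_iff] at hy
          rcases hy with rfl | hy
          · exact hgM
          · exact (Submodule.mem_inf.mp (hs'sub hy)).1
        · intro y hyM
          set c : ℂ := (y i).coeff (b i) * ((g i).coeff (b i))⁻¹ with hc
          have hmem : y - c • g ∈ M ⊓ stdMod p b' :=
            Submodule.mem_inf.mpr ⟨sub_mem hyM (Submodule.smul_mem _ _ hgM),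
             sub_smul_mem (hu hyM) (hu hgM) hgc⟩
          have hy2 : y = algebraMap ℂ (KK p) c * g + (y - c • g) := by
            rw [← smul_eq_algebraMap_mul]
            abel
          rw [hy2]
          exact Submodule.add_mem _
            (OSpan_mul_gen (Finset.mem_insert_self g s') (O.algebraMap_mem c))
            (OSpan_mono (Finset.subset_insert g s') (hs'span hmem))
      · push_neg at hg
        have hMle : M ≤ M ⊓ stdMod p b' := by
          refine le_inf le_rfl fun y hy => ?_
          intro j m hm
          rw [hb'app j] at hm
          rcases eq_or_ne j i with rfl | hne
          · rw [if_pos rfl] at hm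
            rcases lt_or_eq_of_le (Int.lt_add_one_iff.mp hm) with hlt | heq
            · exact hu hy j m hlt
            · subst heq
              exact hg y hy
          · rw [if_neg hne, add_zero] at hm
            exact hu hy j m hm
        exact ⟨s', fun y hy => (Submodule.mem_inf.mp (hs'sub hy)).1, le_trans hMle hs'span⟩

lemma I_upper (hO : (O : Set (KK p)) ⊆ (stdMod p 0 : Set (KK p)))
    {I : Submodule ℂ (KK p)} (hI : IsFracIdeal O I) :
    ∃ m : Fin p → ℤ, I ≤ stdMod p m := by
  obtain ⟨hstab, ⟨s, hssub, hrep⟩, ⟨g₀, hg₀, hg₀ne⟩⟩ := hI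
  have hne : (insert g₀ s).Nonempty := ⟨g₀, Finset.mem_insert_self _ _⟩
  refine ⟨fun i => (insert g₀ s).inf' hne (fun g => (g i).order), ?_⟩
  intro x hx
  obtain ⟨A, hA, rfl⟩ := hrep x hx
  refine Submodule.sum_mem _ fun g hgs => ?_
  rw [mem_stdMod_iff]
  intro i hnei
  show (insert g₀ s).inf' hne (fun g => (g i).order) ≤ ((A g * g) i).order
  have hprod : (A g * g) i = A g i * g i := rfl
  rw [hprod] at hnei ⊢
  have hA0 : A g i ≠ 0 := fun h => hnei (by rw [h, zero_mul])
  have hg0 : g i ≠ 0 := fun h => hnei (by rw [h, mul_zero])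
  rw [HahnSeries.order_mul hA0 hg0]
  have h1 : (0 : ℤ) ≤ (A g i).order :=
    mem_stdMod_iff.mp (hO (hA g hgs) : A g ∈ stdMod p 0) i hA0
  have h2 : (insert g₀ s).inf' hne (fun g => (g i).order) ≤ (g i).order :=
    Finset.inf'_le _ (Finset.mem_insert_of_mem hgs)
  exact le_trans h2 (le_add_of_nonneg_left h1)

lemma J_lower (hγ : dualMod O (stdMod p 0 : Set (KK p)) = stdMod p (fun i => (γ i : ℤ)))
    {I : Submodule ℂ (KK p)} {m : Fin p → ℤ} (hm : I ≤ stdMod p m) :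
    stdMod p (fun k => (γ k : ℤ) - m k) ≤ dualMod O (I : Set (KK p)) := by
  intro x hx g hg
  have h2 := stdMod_mul hx (hm hg)
  have he : ((fun k => (γ k : ℤ) - m k) + m) = fun k => (γ k : ℤ) := by funext k; simp
  rw [he] at h2
  exact stdModγ_le_O hγ h2

lemma J_upper (hO : (O : Set (KK p)) ⊆ (stdMod p 0 : Set (KK p)))
    {I : Submodule ℂ (KK p)} {h : KK p} (hh : h ∈ I) (hhne : ∀ i, h i ≠ 0) :
    dualMod O (I : Set (KK p)) ≤ stdMod p (fun k => -(h k).order) := by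
  intro x hx
  have h1 : x * h ∈ stdMod p 0 := hO (hx h hh)
  rw [mem_stdMod_iff] at h1 ⊢
  intro i hxi
  have h2 : (x * h) i ≠ 0 := mul_ne_zero hxi (hhne i)
  have h3 := h1 i h2
  have h4 : (x * h) i = x i * h i := rfl
  rw [h4, HahnSeries.order_mul hxi (hhne i)] at h3
  have h3' : (0 : ℤ) ≤ (x i).order + (h i).order := h3
  show -(h i).order ≤ (x i).order
  omega

lemma I_lower (hγ : dualMod O (stdMod p 0 : Set (KK p)) = stdMod p (fun i => (γ i : ℤ)))
    {I : Submodule ℂ (KK p)} (hstab : ∀ a ∈ O, ∀ x ∈ I, a * x ∈ I)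
    {h : KK p} (hh : h ∈ I) (hhne : ∀ i, h i ≠ 0) :
    stdMod p (fun k => (γ k : ℤ) + (h k).order) ≤ I := by
  intro x hx
  set u : KK p := fun i => x i * (h i)⁻¹ with hu
  have hinv : ∀ i, (h i)⁻¹ ≠ 0 := fun i => inv_ne_zero (hhne i)
  have hordinv : ∀ i, ((h i)⁻¹).order = -(h i).order := by
    intro i
    have h1 : (h i * (h i)⁻¹) = 1 := mul_inv_cancel₀ (hhne i)
    have h2 := HahnSeries.order_mul (hhne i) (hinv i)
    rw [h1, HahnSeries.order_one] at h2
    omega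
  have huγ : u ∈ stdMod p (fun i => (γ i : ℤ)) := by
    rw [mem_stdMod_iff]
    intro i hui
    have hx0 : x i ≠ 0 := by
      intro h0
      exact hui (by rw [hu]; dsimp only; rw [h0, zero_mul])
    have h5 : x i * (h i)⁻¹ = u i := rfl
    have h6 : u i = x i * (h i)⁻¹ := rfl
    rw [h6, HahnSeries.order_mul hx0 (hinv i), hordinv i]
    have h7 : (γ i : ℤ) + (h i).order ≤ (x i).order := mem_stdMod_iff.mp hx i hx0
    show ((γ i : ℤ)) ≤ (x i).order + -(h i).order
    omega
  have hxu : x = u * h := by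
    funext i
    show x i = x i * (h i)⁻¹ * h i
    rw [inv_mul_cancel_right₀ (hhne i)]
  rw [hxu]
  exact hstab u (stdModγ_le_O hγ huγ) h hh

lemma isFrac_sup (hγ : dualMod O (stdMod p 0 : Set (KK p)) = stdMod p (fun i => (γ i : ℤ)))
    (hO : (O : Set (KK p)) ⊆ (stdMod p 0 : Set (KK p)))
    {I : Submodule ℂ (KK p)} (hI : IsFracIdeal O I) (u : Fin p → ℤ) :
    IsFracIdeal O ((dualMod O (I : Set (KK p)) : Submodule ℂ (KK p)) ⊔ stdMod p u) := by
  obtain ⟨m, hm⟩ := I_upper hO hI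
  obtain ⟨h, hhI, hhne⟩ := hI.2.2
  refine ⟨?_, ?_, ?_⟩
  · intro a ha x hx
    rcases Submodule.mem_sup.mp hx with ⟨y, hy, z, hz, rfl⟩
    rw [mul_add]
    refine Submodule.add_mem _ (Submodule.mem_sup_left (dual_stable ha hy))
      (Submodule.mem_sup_right ?_)
    have h2 := stdMod_mul (hO ha : a ∈ stdMod p 0) hz
    have he : ((0 : Fin p → ℤ) + u) = u := zero_add u
    rw [he] at h2
    exact h2
  · set B : Fin p → ℤ := fun k => min (-(h k).order) (u k) with hB
    set A : Fin p → ℤ := fun k => max (u k) (B k) with hA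
    refine fg_sandwich hγ (∑ k, (A k - B k).toNat) A B _ (fun k => le_max_right _ _) le_rfl ?_ ?_
    · exact le_trans (stdMod_antitone (fun k => le_max_left _ _)) le_sup_right
    · refine sup_le ?_ (stdMod_antitone (fun k => min_le_right _ _))
      exact le_trans (J_upper hO hhI hhne) (stdMod_antitone (fun k => min_le_left _ _))
  · exact ⟨fun k => HahnSeries.single (u k) 1,
      Submodule.mem_sup_right (tvec_mem (le_refl u)),
      fun k => HahnSeries.single_ne_zero one_ne_zero⟩

lemma valC_eq_int {g : LaurentSeries ℂ} {n : ℤ} (h : valC g = (n : WithTop ℤ)) :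
    g ≠ 0 ∧ g.order = n := by
  by_cases hg : g = 0
  · rw [valC, if_pos hg] at h
    exact absurd h.symm (WithTop.coe_ne_top)
  · rw [valC, if_neg hg] at h
    exact ⟨hg, WithTop.coe_injective h⟩

lemma lam_iff {M : Submodule ℂ (KK p)} {c : Fin p → ℤ} (hc : stdMod p c ≤ M)
    (w : Fin p → ℤ) (i : Fin p) :
    (LamSet i w (vals (M : Set (KK p)))).Nonempty ↔
      ∃ g ∈ M, g ∈ stdMod p w ∧ (g i).coeff (w i) ≠ 0 := by
  constructor
  · rintro ⟨α, hαv, hαi, hαw⟩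
    obtain ⟨g, hgM, hgv⟩ := hαv
    have hkey : ∀ j, g j ≠ 0 ∧ (g j).order = α j := fun j => valC_eq_int (hgv j)
    refine ⟨g, hgM, ?_, ?_⟩
    · rw [mem_stdMod_iff]
      intro j _
      rw [(hkey j).2]
      exact hαw j
    · rw [← hαi, ← (hkey i).2]
      exact HahnSeries.coeff_order_eq_zero.not.mpr (hkey i).1
  · rintro ⟨g, hgM, hgw, hgc⟩
    have hgi : g i ≠ 0 := HahnSeries.ne_zero_of_coeff_ne_zero hgc
    set f : KK p := fun j => if g j = 0 then HahnSeries.single (max (w j) (c j)) 1 else 0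
      with hf
    have hfc : f ∈ stdMod p c := by
      intro j m hm
      rw [hf]
      dsimp only
      split
      · exact HahnSeries.coeff_single_of_ne (by omega)
      · rfl
    set α : Fin p → ℤ := fun j => if g j = 0 then max (w j) (c j) else (g j).order with hα
    have hαapp : ∀ j, α j = if g j = 0 then max (w j) (c j) else (g j).order := fun j => rfl
    have hordw : ∀ j, g j ≠ 0 → w j ≤ (g j).order := mem_stdMod_iff.mp hgw
    refine ⟨α, ⟨g + f, Submodule.add_mem _ hgM (hc hfc), ?_⟩, ?_, ?_⟩
    · intro j
      have hadd : (g + f) j = g j + f j := rfl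
      rw [hadd, hαapp j]
      by_cases h0 : g j = 0
      · rw [if_pos h0, h0, zero_add, hf]
        dsimp only
        rw [if_pos h0, valC, if_neg (HahnSeries.single_ne_zero one_ne_zero),
          HahnSeries.order_single one_ne_zero]
      · rw [if_neg h0, hf]
        dsimp only
        rw [if_neg h0, add_zero, valC, if_neg h0]
    · rw [hαapp i, if_neg hgi]
      exact le_antisymm (HahnSeries.order_le_of_coeff_ne_zero hgc) (hordw i hgi)
    · intro j
      rw [hαapp j]
      split
      · exact le_max_left _ _
      · exact hordw j ‹_›

lemma exists_iff_le_sup {M : Submodule ℂ (KK p)} {w : Fin p → ℤ} {i : Fin p} :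
    (∃ g ∈ M, g ∈ stdMod p w ∧ (g i).coeff (w i) ≠ 0) ↔
      stdMod p w ≤ M ⊔ stdMod p (w + Pi.single i 1) := by
  constructor
  · rintro ⟨g, hgM, hgw, hgc⟩ x hx
    set c : ℂ := (x i).coeff (w i) * ((g i).coeff (w i))⁻¹ with hc
    have h1 : x - c • g ∈ stdMod p (w + Pi.single i 1) := sub_smul_mem hx hgw hgc
    have hx2 : x = c • g + (x - c • g) := by abel
    rw [hx2]
    exact Submodule.add_mem _ (Submodule.mem_sup_left (Submodule.smul_mem _ _ hgM))
      (Submodule.mem_sup_right h1)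
  · intro hle
    have hεw : es i (w i) ∈ stdMod p w := es_mem_stdMod le_rfl
    rcases Submodule.mem_sup.mp (hle hεw) with ⟨g, hgM, y, hy, hxy⟩
    have hgdef : g = es i (w i) - y := by rw [← hxy]; abel
    have hycoeff : ∀ j, ∀ m : ℤ, (j = i → m ≤ w i) → (j ≠ i → m < w j) →
        (y j).coeff m = 0 := by
      intro j m hm1 hm2
      refine hy j m ?_
      have hws : ((w + Pi.single i 1) : Fin p → ℤ) j = w j + (if j = i then 1 else 0) := by
        rw [Pi.add_apply, Pi.single_apply]
      refine lt_of_lt_of_eq ?_ hws.symm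
      rcases eq_or_ne j i with rfl | hne
      · have h1 := hm1 rfl
        rw [if_pos rfl]
        omega
      · have h2 := hm2 hne
        rw [if_neg hne]
        omega
    refine ⟨g, hgM, ?_, ?_⟩
    · intro j m hm
      have hsub : g j = es i (w i) j - y j := by rw [hgdef]; rfl
      rw [hsub, HahnSeries.coeff_sub,
        hycoeff j m (fun hji => by subst hji; exact le_of_lt hm) (fun _ => hm), sub_zero]
      rcases eq_or_ne j i with rfl | hne
      · rw [show es j (w j) j = HahnSeries.single (w j) 1 from Pi.single_eq_same _ _]
        exact HahnSeries.coeff_single_of_ne (by omega)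
      · rw [show es i (w i) j = 0 from Pi.single_eq_of_ne hne _]
        rfl
    · have hsub : g i = es i (w i) i - y i := by rw [hgdef]; rfl
      rw [hsub, HahnSeries.coeff_sub, hycoeff i (w i) (fun _ => le_rfl)
          (fun hne => absurd rfl hne),
        sub_zero, show es i (w i) i = HahnSeries.single (w i) 1 from Pi.single_eq_same _ _,
        HahnSeries.coeff_single_same]
      exact one_ne_zero

lemma exists_iff_ne {M : Submodule ℂ (KK p)} {v : Fin p → ℤ} {i : Fin p} :
    (∃ g ∈ M, g ∈ stdMod p v ∧ (g i).coeff (v i) ≠ 0) ↔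
      M ⊓ stdMod p v ≠ M ⊓ stdMod p (v + Pi.single i 1) := by
  have hvs : ∀ j, ((v + Pi.single i 1) : Fin p → ℤ) j = v j + (if j = i then 1 else 0) :=
    fun j => by rw [Pi.add_apply, Pi.single_apply]
  constructor
  · rintro ⟨g, hgM, hgv, hgc⟩ heq
    have hg2 : g ∈ M ⊓ stdMod p (v + Pi.single i 1) :=
      heq ▸ (Submodule.mem_inf.mpr ⟨hgM, hgv⟩)
    refine hgc ((Submodule.mem_inf.mp hg2).2 i (v i) ?_)
    refine lt_of_lt_of_eq ?_ (hvs i).symm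
    rw [if_pos rfl]
    omega
  · intro hne
    by_contra hno
    push_neg at hno
    refine hne (le_antisymm ?_ ?_)
    · intro g hg
      obtain ⟨hgM, hgv⟩ := Submodule.mem_inf.mp hg
      refine Submodule.mem_inf.mpr ⟨hgM, ?_⟩
      intro j m hm
      rw [hvs j] at hm
      rcases eq_or_ne j i with rfl | hne'
      · rw [if_pos rfl] at hm
        rcases lt_or_eq_of_le (Int.lt_add_one_iff.mp hm) with hlt | heq
        · exact hgv j m hlt
        · subst heq
          exact hno g hgM hgv
      · rw [if_neg hne', add_zero] at hm
        exact hgv j m hm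
    · refine le_inf inf_le_left (le_trans inf_le_right (stdMod_antitone fun j => ?_))
      have h3 : v j ≤ v j + (if j = i then (1 : ℤ) else 0) := by split <;> omega
      exact le_of_le_of_eq h3 (hvs j).symm

lemma sup_eq_iff {J : Submodule ℂ (KK p)} {w : Fin p → ℤ} {i : Fin p} :
    stdMod p w ≤ J ⊔ stdMod p (w + Pi.single i 1) ↔
      J ⊔ stdMod p w = J ⊔ stdMod p (w + Pi.single i 1) := by
  have hwle : w ≤ w + Pi.single i 1 := fun j => by
    have h2 : ((w + Pi.single i 1) : Fin p → ℤ) j = w j + (if j = i then 1 else 0) := by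
      rw [Pi.add_apply, Pi.single_apply]
    have h3 : w j ≤ w j + (if j = i then (1 : ℤ) else 0) := by split <;> omega
    exact le_of_le_of_eq h3 h2.symm
  constructor
  · intro hle
    exact le_antisymm (sup_le le_sup_left hle)
      (sup_le le_sup_left (le_trans (stdMod_antitone hwle) le_sup_right))
  · intro heq
    exact le_trans le_sup_right heq.le

end LambdaAux

/-- **Λ-duality**: `Λ_i(w, val(I^∨)) ≠ ∅` iff `Λ_i(γ − w − e_i, val I) = ∅`. -/
theorem lambda_duality {p : ℕ} (hp : 1 ≤ p) (O : Subalgebra ℂ (KK p))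
    (hO : (O : Set (KK p)) ⊆ (stdMod p 0 : Set (KK p)))
    (γ : Fin p → ℕ)
    (hγ : dualMod O (stdMod p 0 : Set (KK p)) = stdMod p (fun i => (γ i : ℤ)))
    (hG1 : ∀ I : Submodule ℂ (KK p), IsFracIdeal O I →
      dualMod O ((dualMod O (I : Set (KK p)) : Submodule ℂ (KK p)) : Set (KK p)) = I)
    (hG2 : ∀ I J : Submodule ℂ (KK p), IsFracIdeal O I → IsFracIdeal O J → I ≤ J →
      qdim I J = qdim (dualMod O (J : Set (KK p))) (dualMod O (I : Set (KK p))))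
    (hG3 : DeltaSet (fun i => (γ i : ℤ) - 1) (vals (O : Set (KK p))) = ∅)
    (I : Submodule ℂ (KK p)) (hI : IsFracIdeal O I) (w : Fin p → ℤ) (i : Fin p) :
    (LamSet i w
      (vals ((dualMod O (I : Set (KK p)) : Submodule ℂ (KK p)) : Set (KK p)))).Nonempty ↔
      LamSet i ((fun k => (γ k : ℤ) - w k) - Pi.single i 1)
        (vals (I : Set (KK p))) = ∅ := by
  classical
  set J : Submodule ℂ (KK p) := dualMod O (I : Set (KK p)) with hJ
  set v : Fin p → ℤ := (fun k => (γ k : ℤ) - w k) - Pi.single i 1 with hv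
  have hvapp : ∀ k, v k = (γ k : ℤ) - w k - (if k = i then 1 else 0) := fun k => by
    rw [hv, Pi.sub_apply, Pi.single_apply]
  have hveapp : ∀ k, ((v + Pi.single i 1) : Fin p → ℤ) k = v k + (if k = i then 1 else 0) :=
    fun k => by rw [Pi.add_apply, Pi.single_apply]
  have hweapp : ∀ k, ((w + Pi.single i 1) : Fin p → ℤ) k = w k + (if k = i then 1 else 0) :=
    fun k => by rw [Pi.add_apply, Pi.single_apply]
  have e1 : (fun k => (γ k : ℤ) - w k) = ((v + Pi.single i 1) : Fin p → ℤ) :=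
    funext fun k => by rw [hveapp k, hvapp k]; ring
  have e2 : (fun k => (γ k : ℤ) - ((w + Pi.single i 1) : Fin p → ℤ) k) = v :=
    funext fun k => by rw [hweapp k, hvapp k]; ring
  obtain ⟨m, hm⟩ := LambdaAux.I_upper hO hI
  obtain ⟨h, hhI, hhne⟩ := hI.2.2
  have s1 := LambdaAux.lam_iff (LambdaAux.J_lower hγ hm) w i
  have s6 := LambdaAux.lam_iff (LambdaAux.I_lower hγ hI.1 hhI hhne) v i
  have s2 := LambdaAux.exists_iff_le_sup (M := J) (w := w) (i := i)
  have s3 := LambdaAux.sup_eq_iff (J := J) (w := w) (i := i)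
  have s5 := LambdaAux.exists_iff_ne (M := I) (v := v) (i := i)
  have dualform : ∀ u : Fin p → ℤ,
      dualMod O ((J ⊔ stdMod p u : Submodule ℂ (KK p)) : Set (KK p))
        = I ⊓ stdMod p (fun k => (γ k : ℤ) - u k) := by
    intro u
    rw [LambdaAux.dual_sup, hJ, hG1 I hI, LambdaAux.dual_stdMod hγ]
  have s4 : (J ⊔ stdMod p w = J ⊔ stdMod p (w + Pi.single i 1)) ↔
      (I ⊓ stdMod p v = I ⊓ stdMod p (v + Pi.single i 1)) := by
    constructor
    · intro hsup
      have hd := congrArg (fun N : Submodule ℂ (KK p) => dualMod O (N : Set (KK p))) hsup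
      rw [dualform w, dualform (w + Pi.single i 1), e1, e2] at hd
      exact hd.symm
    · intro hinf
      have hw1 := (hG1 _ (LambdaAux.isFrac_sup hγ hO hI w)).symm
      have hw2 := (hG1 _ (LambdaAux.isFrac_sup hγ hO hI (w + Pi.single i 1))).symm
      refine Eq.trans hw1 (Eq.trans ?_ hw2.symm)
      exact congrArg (fun N : Submodule ℂ (KK p) => dualMod O (N : Set (KK p)))
        (by rw [dualform w, dualform (w + Pi.single i 1), e1, e2]; exact hinf.symm)
  have X1 : (I ⊓ stdMod p v = I ⊓ stdMod p (v + Pi.single i 1)) ↔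
      ¬ (∃ g ∈ I, g ∈ stdMod p v ∧ (g i).coeff (v i) ≠ 0) :=
    ((not_congr s5).trans not_not).symm
  have X2 : (¬ (∃ g ∈ I, g ∈ stdMod p v ∧ (g i).coeff (v i) ≠ 0)) ↔
      ¬ (LamSet i v (vals (I : Set (KK p)))).Nonempty := not_congr s6.symm
  exact (s1.trans (s2.trans (s3.trans (s4.trans (X1.trans X2))))).trans
    Set.not_nonempty_iff_eq_empty
end
end

section
/- For every fractional ideal I of O and every v ∈ ℤ^p, c_{I^∨}(v) = p − c_I(γ − v − 1). -/
open scoped Classical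

set_option synthInstance.maxHeartbeats 1000000
set_option maxHeartbeats 1000000

noncomputable section

namespace CIDualAux

open Submodule

variable {p : ℕ}

lemma mem_stdMod {α : Fin p → ℤ} {g : KK p} :
    g ∈ stdMod p α ↔ ∀ i, ∀ j : ℤ, j < α i → (g i).coeff j = 0 := Iff.rfl

lemma stdMod_antitone {α β : Fin p → ℤ} (h : α ≤ β) : stdMod p β ≤ stdMod p α :=
  fun _ hg i j hj => hg i j (lt_of_lt_of_le hj (h i))

lemma coeff_mul_eq_zero {x y : LaurentSeries ℂ} {a b j : ℤ}
    (hx : ∀ k, k < a → x.coeff k = 0) (hy : ∀ k, k < b → y.coeff k = 0)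
    (hj : j < a + b) : (x * y).coeff j = 0 := by
  rw [HahnSeries.coeff_mul]
  refine Finset.sum_eq_zero fun ij hij => ?_
  rw [Finset.mem_addAntidiagonal] at hij
  obtain ⟨h1, h2, h3⟩ := hij
  have ha : a ≤ ij.1 := by
    by_contra hlt
    exact h1 (hx _ (lt_of_not_ge hlt))
  have hb : b ≤ ij.2 := by
    by_contra hlt
    exact h2 (hy _ (lt_of_not_ge hlt))
  exact absurd hj (not_lt.mpr (h3 ▸ add_le_add ha hb))

lemma mul_mem_stdMod {α β : Fin p → ℤ} {x y : KK p}
    (hx : x ∈ stdMod p α) (hy : y ∈ stdMod p β) : x * y ∈ stdMod p (α + β) :=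
  fun i j hj => coeff_mul_eq_zero (hx i) (hy i) hj

/-- `t^w`. -/
def tpow (p : ℕ) (w : Fin p → ℤ) : KK p := fun i => HahnSeries.single (w i) 1

lemma tpow_mem (w : Fin p → ℤ) : tpow p w ∈ stdMod p w := fun _ _ hj =>
  HahnSeries.coeff_single_of_ne (ne_of_lt hj)

lemma tpow_ne (w : Fin p → ℤ) (i : Fin p) : tpow p w i ≠ 0 :=
  HahnSeries.single_ne_zero one_ne_zero

lemma tpow_mul_tpow (a b : Fin p → ℤ) : tpow p a * tpow p b = tpow p (a + b) := by
  funext i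
  simp [tpow, Pi.mul_apply, HahnSeries.single_mul_single]

lemma tpow_zero : tpow p 0 = 1 := by
  funext i
  simp [tpow, HahnSeries.single_zero_one]

lemma tpow_coeff_mul (w : Fin p → ℤ) (g : KK p) (i : Fin p) (j : ℤ) :
    ((tpow p w * g) i).coeff j = (g i).coeff (j - w i) := by
  have h := HahnSeries.coeff_single_mul_add (r := (1:ℂ)) (x := g i)
    (a := j - w i) (b := w i)
  rw [sub_add_cancel] at h
  simpa [tpow, Pi.mul_apply] using h

lemma one_mem_stdMod_zero : (1 : KK p) ∈ stdMod p 0 := by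
  intro i j hj
  have hj' : j < 0 := hj
  rw [Pi.one_apply, HahnSeries.coeff_one, if_neg (by omega)]

lemma tpow_mul_mem_iff {w α : Fin p → ℤ} {g : KK p} :
    tpow p w * g ∈ stdMod p (w + α) ↔ g ∈ stdMod p α := by
  constructor
  · intro h i j hj
    have h2 := h i (j + w i) (by
      have : (w + α) i = w i + α i := rfl
      omega)
    rw [tpow_coeff_mul] at h2
    simpa using h2
  · intro h i j hj
    rw [tpow_coeff_mul]
    have : (w + α) i = w i + α i := rfl
    exact h i _ (by omega)

variable {O : Subalgebra ℂ (KK p)}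

lemma mem_dualMod {S : Set (KK p)} {h : KK p} :
    h ∈ dualMod O S ↔ ∀ g ∈ S, h * g ∈ O := Iff.rfl

lemma dualMod_anti {S T : Set (KK p)} (hST : S ⊆ T) : dualMod O T ≤ dualMod O S :=
  fun _ hh g hg => hh g (hST hg)

lemma dualMod_sup (A B : Submodule ℂ (KK p)) :
    dualMod O ((A ⊔ B : Submodule ℂ (KK p)) : Set (KK p)) =
      dualMod O (A : Set (KK p)) ⊓ dualMod O (B : Set (KK p)) := by
  apply le_antisymm
  · exact le_inf (dualMod_anti fun g hg => (le_sup_left : A ≤ A ⊔ B) hg)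
      (dualMod_anti fun g hg => (le_sup_right : B ≤ A ⊔ B) hg)
  · rintro h ⟨h1, h2⟩ g hg
    obtain ⟨a, ha, b, hb, rfl⟩ := Submodule.mem_sup.mp hg
    rw [mul_add]
    exact O.add_mem (h1 a ha) (h2 b hb)

lemma stdMod_gamma_le {γ : Fin p → ℕ}
    (hγ : dualMod O (stdMod p 0 : Set (KK p)) = stdMod p (fun i => (γ i : ℤ))) :
    ∀ g ∈ stdMod p (fun i => (γ i : ℤ)), g ∈ O := by
  intro g hg
  rw [← hγ] at hg
  simpa using hg 1 one_mem_stdMod_zero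

lemma dualMod_stdMod {γ : Fin p → ℕ}
    (hγ : dualMod O (stdMod p 0 : Set (KK p)) = stdMod p (fun i => (γ i : ℤ)))
    (w : Fin p → ℤ) :
    dualMod O (stdMod p w : Set (KK p)) = stdMod p ((fun i => (γ i : ℤ)) - w) := by
  ext h
  constructor
  · intro hh
    have h1 : h * tpow p w ∈ dualMod O (stdMod p 0 : Set (KK p)) := by
      intro g hg
      have h2 : tpow p w * g ∈ stdMod p w := by
        have := mul_mem_stdMod (tpow_mem w) hg
        simpa using this
      rw [mul_assoc]
      exact hh _ h2
    rw [hγ] at h1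
    have h2 := mul_mem_stdMod h1 (tpow_mem (p := p) (-w))
    have he : h * tpow p w * tpow p (-w) = h := by
      rw [mul_assoc, tpow_mul_tpow]
      simp [tpow_zero]
    rw [he] at h2
    simpa [sub_eq_add_neg] using h2
  · intro hh g hg
    apply stdMod_gamma_le hγ
    have := mul_mem_stdMod hh hg
    simpa using this

section Generic

variable {V : Type} [AddCommGroup V] [Module ℂ V]

/-- Generic version of `qdim`. -/
def qdimG (A B : Submodule ℂ V) : ℕ := Module.finrank ℂ ↥(B.map A.mkQ)

lemma qdimG_eq_finrank_map {W : Type} [AddCommGroup W] [Module ℂ W]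
    (A B : Submodule ℂ V) (φ : V →ₗ[ℂ] W)
    (h : ∀ x ∈ B, (x ∈ A ↔ φ x = 0)) :
    qdimG A B = Module.finrank ℂ ↥(B.map φ) := by
  have hker : LinearMap.ker (A.mkQ ∘ₗ B.subtype) = LinearMap.ker (φ ∘ₗ B.subtype) := by
    ext x
    simp only [LinearMap.mem_ker, LinearMap.comp_apply, Submodule.subtype_apply,
      Submodule.mkQ_apply, Submodule.Quotient.mk_eq_zero]
    exact h x.1 x.2
  have e1 := (LinearMap.quotKerEquivRange (A.mkQ ∘ₗ B.subtype)).finrank_eq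
  have e2 := (LinearMap.quotKerEquivRange (φ ∘ₗ B.subtype)).finrank_eq
  rw [hker] at e1
  have r1 : LinearMap.range (A.mkQ ∘ₗ B.subtype) = Submodule.map A.mkQ B := by
    rw [LinearMap.range_comp, Submodule.range_subtype]
  have r2 : LinearMap.range (φ ∘ₗ B.subtype) = Submodule.map φ B := by
    rw [LinearMap.range_comp, Submodule.range_subtype]
  rw [r1] at e1
  rw [r2] at e2
  rw [qdimG, ← e1, e2]

lemma qdimG_second (A B' : Submodule ℂ V) :
    qdimG (B' ⊓ A) B' = qdimG A (B' ⊔ A) := by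
  have e := (LinearMap.quotientInfEquivSupQuotient B' A).finrank_eq
  have f1 := (LinearMap.quotKerEquivRange ((B' ⊓ A).mkQ ∘ₗ B'.subtype)).finrank_eq
  have f2 := (LinearMap.quotKerEquivRange (A.mkQ ∘ₗ (B' ⊔ A).subtype)).finrank_eq
  rw [LinearMap.ker_comp, Submodule.ker_mkQ] at f1 f2
  have r1 : LinearMap.range ((B' ⊓ A).mkQ ∘ₗ B'.subtype) = Submodule.map (B' ⊓ A).mkQ B' := by
    rw [LinearMap.range_comp, Submodule.range_subtype]
  have r2 : LinearMap.range (A.mkQ ∘ₗ (B' ⊔ A).subtype) = Submodule.map A.mkQ (B' ⊔ A) := by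
    rw [LinearMap.range_comp, Submodule.range_subtype]
  rw [r1] at f1
  rw [r2] at f2
  rw [qdimG, qdimG, ← f1, ← f2, Submodule.comap_inf, e]

end Generic

lemma qdim_eq_qdimG (A B : Submodule ℂ (KK p)) : qdim A B = qdimG A B := rfl

/-- The linear map sending `g` to the vector of coefficients `(g i).coeff (v i)`. -/
def coeffMap (p : ℕ) (v : Fin p → ℤ) : KK p →ₗ[ℂ] (Fin p → ℂ) where
  toFun g := fun i => (g i).coeff (v i)
  map_add' a b := by
    funext i
    simp [Pi.add_apply, HahnSeries.coeff_add]
  map_smul' c a := by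
    funext i
    simp [Pi.smul_apply, HahnSeries.coeff_smul]

lemma coeffMap_apply (v : Fin p → ℤ) (g : KK p) (i : Fin p) :
    coeffMap p v g i = (g i).coeff (v i) := rfl

lemma mem_stdMod_succ {v : Fin p → ℤ} {x : KK p} (hx : x ∈ stdMod p v)
    (h0 : coeffMap p v x = 0) : x ∈ stdMod p (v + 1) := by
  intro i j hj
  have hj' : j < v i + 1 := hj
  rcases lt_or_eq_of_le (Int.lt_add_one_iff.mp hj') with h | h
  · exact hx i j h
  · rw [h]
    exact congrFun h0 i

lemma coeffMap_eq_zero_of_mem {v : Fin p → ℤ} {x : KK p}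
    (hx : x ∈ stdMod p (v + 1)) : coeffMap p v x = 0 := by
  funext i
  exact hx i (v i) (by have : (v + 1) i = v i + 1 := rfl; omega)

lemma cI_eq_finrank (I : Submodule ℂ (KK p)) (u : Fin p → ℤ) :
    cI I u = Module.finrank ℂ ↥((I ⊓ stdMod p u).map (coeffMap p u)) := by
  rw [cI, qdim_eq_qdimG]
  apply qdimG_eq_finrank_map
  rintro x ⟨hxI, hxu⟩
  constructor
  · rintro ⟨-, hx1⟩
    exact coeffMap_eq_zero_of_mem hx1
  · intro hφ
    exact ⟨hxI, mem_stdMod_succ hxu hφ⟩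

/-- Componentwise order bound vector for an element. -/
def beta (g : KK p) : Fin p → ℤ := fun i => if g i = 0 then 0 else (g i).order

lemma mem_stdMod_beta (g : KK p) : g ∈ stdMod p (beta g) := by
  intro i j hj
  by_cases hz : g i = 0
  · simp [hz]
  · rw [beta, if_neg hz] at hj
    exact HahnSeries.coeff_eq_zero_of_lt_order hj

lemma exists_le_stdMod {I : Submodule ℂ (KK p)}
    (hO : (O : Set (KK p)) ⊆ (stdMod p 0 : Set (KK p))) (hI : IsFracIdeal O I) :
    ∃ e : Fin p → ℤ, I ≤ stdMod p e := by
  obtain ⟨-, ⟨s, hssub, hspan⟩, -⟩ := hI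
  rcases s.eq_empty_or_nonempty with rfl | hne
  · refine ⟨0, fun x hx => ?_⟩
    obtain ⟨a, -, hx2⟩ := hspan x hx
    rw [Finset.sum_empty] at hx2
    rw [hx2]
    exact (stdMod p 0).zero_mem
  · refine ⟨fun i => s.inf' hne (fun g => beta g i), fun x hx => ?_⟩
    obtain ⟨a, ha, rfl⟩ := hspan x hx
    apply Submodule.sum_mem
    intro g hg
    have h1 : a g * g ∈ stdMod p (0 + beta g) :=
      mul_mem_stdMod (hO (ha g hg)) (mem_stdMod_beta g)
    rw [zero_add] at h1
    exact stdMod_antitone (fun i => Finset.inf'_le (f := fun g => beta g i) hg) h1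

lemma dual_le_stdMod {I : Submodule ℂ (KK p)}
    (hO : (O : Set (KK p)) ⊆ (stdMod p 0 : Set (KK p)))
    {g₀ : KK p} (hg₀ : g₀ ∈ I) (hne : ∀ i, g₀ i ≠ 0) :
    dualMod O (I : Set (KK p)) ≤ stdMod p (fun i => -(g₀ i).order) := by
  intro h hh i j hj
  have hOmem : h * g₀ ∈ stdMod p 0 := hO (hh g₀ hg₀)
  by_cases hz : h i = 0
  · simp [hz]
  · have hmul : (h i) * (g₀ i) ≠ 0 := mul_ne_zero hz (hne i)
    have hord : ((h i) * (g₀ i)).order = (h i).order + (g₀ i).order :=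
      HahnSeries.order_mul hz (hne i)
    have h0le : (0:ℤ) ≤ ((h i) * (g₀ i)).order := by
      by_contra hlt
      exact (mt HahnSeries.coeff_order_eq_zero.mp hmul)
        (hOmem i _ (lt_of_not_ge hlt))
    have hj' : j < -(g₀ i).order := hj
    exact HahnSeries.coeff_eq_zero_of_lt_order (by omega)

lemma stdMod_le_dual {γ : Fin p → ℕ}
    (hγ : dualMod O (stdMod p 0 : Set (KK p)) = stdMod p (fun i => (γ i : ℤ)))
    {I : Submodule ℂ (KK p)} {e : Fin p → ℤ} (hIe : I ≤ stdMod p e) :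
    stdMod p ((fun i => (γ i : ℤ)) - e) ≤ dualMod O (I : Set (KK p)) := by
  intro h hh g hg
  apply stdMod_gamma_le hγ
  have := mul_mem_stdMod hh (hIe hg)
  simpa using this

/-- Monomial basis elements. -/
def mono (p : ℕ) (i : Fin p) (j : ℤ) : KK p := Pi.single i (HahnSeries.single j (1:ℂ))

lemma mono_apply (i : Fin p) (j : ℤ) (k : Fin p) :
    mono p i j k = if k = i then HahnSeries.single j (1:ℂ) else 0 := by
  rw [mono, Pi.single_apply]

lemma finiteDimensional_map_stdMod (d b : Fin p → ℤ) :
    FiniteDimensional ℂ ↥(Submodule.map (stdMod p b).mkQ (stdMod p d)) := by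
  classical
  set π := (stdMod p b).mkQ with hπ
  set T : Finset (KK p) :=
    Finset.univ.biUnion (fun i : Fin p =>
      (Finset.Ico (d i) (b i)).image
        (fun j => mono p i j)) with hT
  have hle : Submodule.map π (stdMod p d) ≤
      Submodule.span ℂ (π '' (T : Set (KK p))) := by
    rintro y ⟨x, hx, rfl⟩
    set z : KK p := ∑ i : Fin p, ∑ j ∈ Finset.Ico (d i) (b i),
      ((x i).coeff j) • mono p i j with hz
    have hzk : ∀ k l, (z k).coeff l =
        if l ∈ Finset.Ico (d k) (b k) then (x k).coeff l else 0 := by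
      intro k l
      have h1 : (z k).coeff l = coeffMap p (fun _ => l) z k := rfl
      rw [h1, hz, map_sum]
      rw [Finset.sum_apply]
      have h2 : ∀ i : Fin p, (coeffMap p (fun _ => l)
          (∑ j ∈ Finset.Ico (d i) (b i),
            ((x i).coeff j) • mono p i j)) k =
          if k = i then (if l ∈ Finset.Ico (d i) (b i) then (x i).coeff l else 0)
            else 0 := by
        intro i
        rw [map_sum, Finset.sum_apply]
        have h3 : ∀ j : ℤ, (coeffMap p (fun _ => l)
            (((x i).coeff j) • mono p i j)) k =
            if k = i then (if l = j then (x i).coeff j else 0) else 0 := by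
          intro j
          rw [map_smul]
          rw [Pi.smul_apply]
          rw [coeffMap_apply]
          rw [mono_apply]
          by_cases hki : k = i
          · rw [if_pos hki, if_pos hki, HahnSeries.coeff_single]
            by_cases hlj : l = j
            · rw [if_pos hlj, if_pos hlj, smul_eq_mul, mul_one]
            · rw [if_neg hlj, if_neg hlj, smul_eq_mul, mul_zero]
          · rw [if_neg hki, if_neg hki]
            simp
        rw [Finset.sum_congr rfl (fun j _ => h3 j)]
        by_cases hki : k = i
        · simp only [if_pos hki]
          rw [Finset.sum_ite_eq (Finset.Ico (d i) (b i)) l (fun j => (x i).coeff j)]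
        · simp only [if_neg hki, Finset.sum_const_zero]
      rw [Finset.sum_congr rfl (fun i _ => h2 i)]
      rw [Finset.sum_ite_eq Finset.univ k
        (fun i => if l ∈ Finset.Ico (d i) (b i) then (x i).coeff l else 0)]
      simp
    have hxz : x - z ∈ stdMod p b := by
      intro k l hl
      rw [Pi.sub_apply, HahnSeries.coeff_sub, hzk k l]
      by_cases hmem : l ∈ Finset.Ico (d k) (b k)
      · rw [if_pos hmem]
        ring
      · rw [if_neg hmem]
        rw [Finset.mem_Ico] at hmem
        have hldk : l < d k := by
          have hl' : l < b k := hl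
          omega
        rw [hx k l hldk]
        ring
    have hpi : π x = π z := by
      rw [hπ]
      rw [Submodule.mkQ_apply, Submodule.mkQ_apply]
      exact (Submodule.Quotient.eq _).mpr hxz
    rw [hpi, hz, map_sum]
    apply Submodule.sum_mem
    intro i _
    rw [map_sum]
    apply Submodule.sum_mem
    intro j hj
    rw [map_smul]
    apply Submodule.smul_mem
    apply Submodule.subset_span
    refine ⟨mono p i j, ?_, rfl⟩
    rw [hT]
    simp only [Finset.coe_biUnion, Finset.coe_univ, Set.mem_iUnion]
    exact ⟨i, trivial, by
      simp only [Finset.coe_image, Set.mem_image, Finset.mem_coe]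
      exact ⟨j, hj, rfl⟩⟩
  have hfd : FiniteDimensional ℂ ↥(Submodule.span ℂ (π '' (T : Set (KK p)))) :=
    FiniteDimensional.span_of_finite ℂ ((T.finite_toSet).image π)
  exact Submodule.finiteDimensional_of_le hle

lemma fg_of_sandwich {γ : Fin p → ℕ}
    (hγ : dualMod O (stdMod p 0 : Set (KK p)) = stdMod p (fun i => (γ i : ℤ)))
    {M : Submodule ℂ (KK p)} {c d : Fin p → ℤ}
    (h1 : stdMod p c ≤ M) (h2 : M ≤ stdMod p d) :
    ∃ s : Finset (KK p), (↑s : Set (KK p)) ⊆ (M : Set (KK p)) ∧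
      ∀ x ∈ M, ∃ a : KK p → KK p, (∀ g ∈ s, a g ∈ O) ∧ x = ∑ g ∈ s, a g * g := by
  classical
  set b : Fin p → ℤ := c + (fun i => (γ i : ℤ)) with hb
  set π := (stdMod p b).mkQ with hπ
  have hWfd : FiniteDimensional ℂ ↥(M.map π) := by
    have hmono : M.map π ≤ (stdMod p d).map π := Submodule.map_mono h2
    have := finiteDimensional_map_stdMod (p := p) d b
    exact Submodule.finiteDimensional_of_le hmono
  obtain ⟨S, hS⟩ := Module.finite_def.mp hWfd
  have hlift : ∀ u : ↥(M.map π), ∃ x, x ∈ M ∧ π x = ↑u := by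
    intro u
    obtain ⟨x, hx, he⟩ := Submodule.mem_map.mp u.2
    exact ⟨x, hx, he⟩
  choose lift hliftM hliftπ using hlift
  set s : Finset (KK p) := insert (tpow p c) (S.image lift) with hs
  refine ⟨s, ?_, ?_⟩
  · intro g hg
    rw [hs] at hg
    rcases Finset.mem_insert.mp (by exact_mod_cast hg) with rfl | hg2
    · exact h1 (tpow_mem c)
    · obtain ⟨u, hu, rfl⟩ := Finset.mem_image.mp hg2
      exact hliftM u
  · intro x hx
    have hxspan : x ∈ Submodule.span ↥O (↑s : Set (KK p)) := by
      have hmem : (⟨π x, Submodule.mem_map_of_mem hx⟩ : ↥(M.map π)) ∈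
          Submodule.span ℂ (↑S : Set ↥(M.map π)) := by
        rw [hS]
        trivial
      obtain ⟨f, -, hf⟩ := mem_span_finset.mp hmem
      have hval := congrArg ((M.map π).subtype) hf
      rw [map_sum] at hval
      simp only [map_smul, Submodule.subtype_apply] at hval
      have hπx : π (∑ u ∈ S, f u • lift u) = π x := by
        rw [map_sum]
        simp only [map_smul, hliftπ]
        exact hval
      set y : KK p := x - ∑ u ∈ S, f u • lift u with hy
      have hyb : y ∈ stdMod p b := by
        have h0 : π y = 0 := by
          rw [hy, map_sub, hπx, sub_self]
        rw [hπ, Submodule.mkQ_apply, Submodule.Quotient.mk_eq_zero] at h0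
        exact h0
      have hcoef : tpow p (-c) * y ∈ O := by
        apply stdMod_gamma_le hγ
        have := mul_mem_stdMod (tpow_mem (p := p) (-c)) hyb
        rw [hb] at this
        simpa [neg_add_cancel_left] using this
      have hyeq : y = (tpow p (-c) * y) * tpow p c := by
        rw [mul_comm (tpow p (-c)) y, mul_assoc, tpow_mul_tpow]
        simp [tpow_zero]
      have hxe : x = (∑ u ∈ S, f u • lift u) + y := by
        rw [hy]
        ring
      rw [hxe]
      apply Submodule.add_mem
      · apply Submodule.sum_mem
        intro u hu
        have hsm : f u • lift u =
            (⟨algebraMap ℂ (KK p) (f u), O.algebraMap_mem (f u)⟩ : ↥O) • lift u := by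
          rw [Subalgebra.smul_def]
          rw [smul_eq_mul]
          exact smul_eq_algebraMap_mul (f u) (lift u)
        rw [hsm]
        apply Submodule.smul_mem
        apply Submodule.subset_span
        rw [hs]
        exact Finset.mem_coe.mpr (Finset.mem_insert_of_mem (Finset.mem_image_of_mem lift hu))
      · have hym : y = (⟨tpow p (-c) * y, hcoef⟩ : ↥O) • tpow p c := by
          rw [Subalgebra.smul_def, smul_eq_mul]
          exact hyeq
        rw [hym]
        apply Submodule.smul_mem
        apply Submodule.subset_span
        rw [hs]
        exact Finset.mem_coe.mpr (Finset.mem_insert_self _ _)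
    obtain ⟨f, -, hf⟩ := mem_span_finset.mp hxspan
    refine ⟨fun g => (f g : KK p), fun g _ => (f g).2, ?_⟩
    rw [← hf]
    apply Finset.sum_congr rfl
    intro g _
    rw [Subalgebra.smul_def, smul_eq_mul]

lemma isFracIdeal_dual_sup_stdMod
    (hO : (O : Set (KK p)) ⊆ (stdMod p 0 : Set (KK p)))
    {γ : Fin p → ℕ}
    (hγ : dualMod O (stdMod p 0 : Set (KK p)) = stdMod p (fun i => (γ i : ℤ)))
    {I : Submodule ℂ (KK p)} (hI : IsFracIdeal O I) (w : Fin p → ℤ) :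
    IsFracIdeal O (dualMod O (I : Set (KK p)) ⊔ stdMod p w) := by
  obtain ⟨e, hIe⟩ := exists_le_stdMod hO hI
  obtain ⟨hstab, hfg, g₀, hg₀, hg₀ne⟩ := hI
  refine ⟨?_, ?_, ?_⟩
  · intro a ha x hxmem
    obtain ⟨n, hn, m, hm, rfl⟩ := Submodule.mem_sup.mp hxmem
    rw [mul_add]
    have h1 : a * n ∈ dualMod O (I : Set (KK p)) := by
      intro g hg
      rw [mul_assoc]
      exact O.mul_mem ha (hn g hg)
    have h2 : a * m ∈ stdMod p w := by
      have := mul_mem_stdMod (hO ha) hm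
      simpa using this
    exact Submodule.add_mem _ (Submodule.mem_sup_left h1) (Submodule.mem_sup_right h2)
  · set c : Fin p → ℤ := fun i => max ((γ i : ℤ) - e i) (w i) with hc
    set d : Fin p → ℤ := fun i => min (-(g₀ i).order) (w i) with hd
    have hlow : stdMod p c ≤ dualMod O (I : Set (KK p)) ⊔ stdMod p w := by
      have ha1 : stdMod p c ≤ stdMod p ((fun i => (γ i : ℤ)) - e) :=
        stdMod_antitone (fun i => le_max_left _ _)
      exact le_trans (le_trans ha1 (stdMod_le_dual hγ hIe)) le_sup_left
    have hhigh : dualMod O (I : Set (KK p)) ⊔ stdMod p w ≤ stdMod p d := by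
      apply sup_le
      · exact le_trans (dual_le_stdMod hO hg₀ hg₀ne)
          (stdMod_antitone (fun i => min_le_left _ _))
      · exact stdMod_antitone (fun i => min_le_right _ _)
    exact fg_of_sandwich hγ hlow hhigh
  · exact ⟨tpow p w, Submodule.mem_sup_right (tpow_mem w), tpow_ne w⟩

end CIDualAux

/-- `c_{I^∨}(v) = p − c_I(γ − v − 1)`. -/
theorem cI_dual {p : ℕ} (hp : 1 ≤ p) (O : Subalgebra ℂ (KK p))
    (hO : (O : Set (KK p)) ⊆ (stdMod p 0 : Set (KK p)))
    (γ : Fin p → ℕ)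
    (hγ : dualMod O (stdMod p 0 : Set (KK p)) = stdMod p (fun i => (γ i : ℤ)))
    (hG1 : ∀ I : Submodule ℂ (KK p), IsFracIdeal O I →
      dualMod O ((dualMod O (I : Set (KK p)) : Submodule ℂ (KK p)) : Set (KK p)) = I)
    (hG2 : ∀ I J : Submodule ℂ (KK p), IsFracIdeal O I → IsFracIdeal O J → I ≤ J →
      qdim I J = qdim (dualMod O (J : Set (KK p))) (dualMod O (I : Set (KK p))))
    (hG3 : DeltaSet (fun i => (γ i : ℤ) - 1) (vals (O : Set (KK p))) = ∅)
    (I : Submodule ℂ (KK p)) (hI : IsFracIdeal O I) (v : Fin p → ℤ) :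
    (cI (dualMod O (I : Set (KK p))) v : ℤ) =
      (p : ℤ) - cI I (fun i => (γ i : ℤ) - v i - 1) := by
  classical
  set N := dualMod O (I : Set (KK p)) with hN
  set φ := CIDualAux.coeffMap p v with hφ
  set U := (N ⊓ stdMod p v).map φ with hU
  -- Step 1 : cI N v = finrank U
  have hstep1 : cI N v = Module.finrank ℂ ↥U := CIDualAux.cI_eq_finrank N v
  have hUle : Module.finrank ℂ ↥U ≤ p := by
    have h := Submodule.finrank_le U
    rwa [Module.finrank_fin_fun] at h
  -- Step 2 : qdim A B = p - finrank U
  set A := N ⊔ stdMod p (v + 1) with hA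
  set B := N ⊔ stdMod p v with hB
  have hv1 : stdMod p (v + 1) ≤ stdMod p v :=
    CIDualAux.stdMod_antitone (le_add_of_nonneg_right zero_le_one)
  have hsupeq : stdMod p v ⊔ A = B := by
    rw [hA, hB, sup_comm (stdMod p v) _, sup_assoc]
    congr 1
    exact sup_eq_right.mpr hv1
  have hinfeq : stdMod p v ⊓ A = (N ⊓ stdMod p v) ⊔ stdMod p (v + 1) := by
    rw [hA, ← inf_sup_assoc_of_le _ hv1, inf_comm (stdMod p v) N]
  have hq2 : qdim A B =
      CIDualAux.qdimG ((N ⊓ stdMod p v) ⊔ stdMod p (v + 1)) (stdMod p v) := by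
    rw [CIDualAux.qdim_eq_qdimG, ← hsupeq, ← CIDualAux.qdimG_second, hinfeq]
  set χ := U.mkQ ∘ₗ φ with hχ
  have hq3 : CIDualAux.qdimG ((N ⊓ stdMod p v) ⊔ stdMod p (v + 1)) (stdMod p v)
      = Module.finrank ℂ ↥((stdMod p v).map χ) := by
    apply CIDualAux.qdimG_eq_finrank_map
    intro x hxv
    constructor
    · intro hxA
      obtain ⟨m, hm, t, ht, rfl⟩ := Submodule.mem_sup.mp hxA
      have hφt : φ t = 0 := CIDualAux.coeffMap_eq_zero_of_mem ht
      have he : χ (m + t) = U.mkQ (φ m) := by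
        rw [hχ, LinearMap.comp_apply, map_add, hφt, add_zero]
      rw [he, Submodule.mkQ_apply, Submodule.Quotient.mk_eq_zero]
      exact Submodule.mem_map_of_mem hm
    · intro hχx
      have hφxU : φ x ∈ U := by
        rw [hχ, LinearMap.comp_apply, Submodule.mkQ_apply,
          Submodule.Quotient.mk_eq_zero] at hχx
        exact hχx
      obtain ⟨m, hm, hφm⟩ := Submodule.mem_map.mp hφxU
      refine Submodule.mem_sup.mpr ⟨m, hm, x - m, ?_, by ring⟩
      apply CIDualAux.mem_stdMod_succ
      · exact Submodule.sub_mem _ hxv hm.2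
      · rw [map_sub, hφm, sub_self]
  have htop : (stdMod p v).map φ = ⊤ := by
    rw [Submodule.eq_top_iff']
    intro cvec
    refine Submodule.mem_map.mpr ⟨fun i => HahnSeries.single (v i) (cvec i), ?_, ?_⟩
    · intro i j hj
      exact HahnSeries.coeff_single_of_ne (ne_of_lt hj)
    · funext i
      exact HahnSeries.coeff_single_same _ _
  have hχtop : (stdMod p v).map χ = ⊤ := by
    rw [hχ, Submodule.map_comp, htop, Submodule.map_top, Submodule.range_mkQ]
  have hq4 : Module.finrank ℂ ↥((stdMod p v).map χ) + Module.finrank ℂ ↥U = p := by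
    rw [hχtop]
    have h5 : Module.finrank ℂ ↥(⊤ : Submodule ℂ ((Fin p → ℂ) ⧸ U)) =
        Module.finrank ℂ ((Fin p → ℂ) ⧸ U) := finrank_top ℂ _
    rw [h5]
    have h6 := Submodule.finrank_quotient_add_finrank U
    have h7 : Module.finrank ℂ (Fin p → ℂ) = p := Module.finrank_fin_fun ℂ
    omega
  -- Step 3 : duality
  have hfracA : IsFracIdeal O A :=
    CIDualAux.isFracIdeal_dual_sup_stdMod hO hγ hI (v + 1)
  have hfracB : IsFracIdeal O B :=
    CIDualAux.isFracIdeal_dual_sup_stdMod hO hγ hI v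
  have hAB : A ≤ B := sup_le_sup_left hv1 N
  have hdual := hG2 A B hfracA hfracB hAB
  have hdB : dualMod O (B : Set (KK p)) = I ⊓ stdMod p ((fun i => (γ i : ℤ)) - v) := by
    rw [hB, CIDualAux.dualMod_sup, hN, hG1 I hI, CIDualAux.dualMod_stdMod hγ v]
  have hdA : dualMod O (A : Set (KK p)) =
      I ⊓ stdMod p ((fun i => (γ i : ℤ)) - (v + 1)) := by
    rw [hA, CIDualAux.dualMod_sup, hN, hG1 I hI, CIDualAux.dualMod_stdMod hγ (v + 1)]
  have hcI2 : cI I (fun i => (γ i : ℤ) - v i - 1) =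
      qdim (dualMod O (B : Set (KK p))) (dualMod O (A : Set (KK p))) := by
    have e1 : (fun i => (γ i : ℤ) - v i - 1) + 1 = (fun i => (γ i : ℤ)) - v := by
      funext i
      show (γ i : ℤ) - v i - 1 + 1 = (γ i : ℤ) - v i
      ring
    have e2 : (fun i => (γ i : ℤ) - v i - 1) = (fun i => (γ i : ℤ)) - (v + 1) := by
      funext i
      show (γ i : ℤ) - v i - 1 = (γ i : ℤ) - (v i + 1)
      ring
    rw [cI, e1, e2, hdB, hdA]
  have hsum : cI I (fun i => (γ i : ℤ) - v i - 1) + cI N v = p := by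
    rw [hcI2, ← hdual, hq2, hq3, hstep1]
    exact hq4
  omega
end
end
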